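/- For a regulated (i.e. possessing right- and left-limits everywhere) path x : [0,∞) → ℝ, a time interval [s,t], and c > 0, the truncated variation equals the integral over all levels y ∈ ℝ of the number of crossings of the interval [y − c/2, y + c/2] by x on [s,t]: TV^c(x,[s,t]) = ∫_ℝ n^{y,c}(x,[s,t]) dy. -/

import Mathlib

open scoped ENNReal
open Filter

/-- Truncated variation of `x` with parameter `c` on `[s,t]`. -/
noncomputable def truncVar (x : ℝ → ℝ) (c s t : ℝ) : ℝ≥0∞ :=
  ⨆ (n : ℕ) (u : Fin (n + 1) → ℝ) (_ : Monotone u) (_ : u 0 = s)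
    (_ : u (Fin.last n) = t),
    ∑ i : Fin n, ENNReal.ofReal (|x (u i.succ) - x (u i.castSucc)| - c)

/-- The number of downcrossings of the interval `[y - c/2, y + c/2]` by `x` on `[s,t]`:
the supremum of `n` such that there exist alternating times
`s ≤ ρ₀ ≤ σ₀ ≤ ρ₁ ≤ σ₁ ≤ ... ≤ t` with `x(ρᵢ) ≥ y + c/2` and `x(σᵢ) < y - c/2`. -/
noncomputable def downcross (x : ℝ → ℝ) (y c s t : ℝ) : ℝ≥0∞ :=
  ⨆ (n : ℕ) (_ : ∃ ρ σ : Fin n → ℝ,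
      (∀ i, s ≤ ρ i ∧ ρ i ≤ σ i ∧ σ i ≤ t) ∧
      (∀ i j : Fin n, i < j → σ i ≤ ρ j) ∧
      (∀ i, y + c / 2 ≤ x (ρ i)) ∧
      (∀ i, x (σ i) < y - c / 2)), (n : ℝ≥0∞)

/-- The number of upcrossings of `[y - c/2, y + c/2]` by `x` on `[s,t]`. -/
noncomputable def upcross (x : ℝ → ℝ) (y c s t : ℝ) : ℝ≥0∞ :=
  downcross (fun u => -x u) (-y) c s t

/-- The total number of crossings of `[y - c/2, y + c/2]` by `x` on `[s,t]`. -/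
noncomputable def crossings (x : ℝ → ℝ) (y c s t : ℝ) : ℝ≥0∞ :=
  upcross x y c s t + downcross x y c s t

/-- `x` is regulated: it possesses right- and left-limits at every point. -/
def Regulated (x : ℝ → ℝ) : Prop :=
  (∀ a : ℝ, ∃ l : ℝ, Tendsto x (nhdsWithin a (Set.Ioi a)) (nhds l)) ∧
  (∀ a : ℝ, ∃ l : ℝ, Tendsto x (nhdsWithin a (Set.Iio a)) (nhds l))

def DCert (a : ℕ → ℝ) (m : ℕ) (y c : ℝ) (n : ℕ) : Prop :=
  ∃ ρ σ : Fin n → ℕ,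
    (∀ i, ρ i ≤ σ i ∧ σ i ≤ m) ∧
    (∀ i j : Fin n, i < j → σ i ≤ ρ j) ∧
    (∀ i, y + c / 2 ≤ a (ρ i)) ∧
    (∀ i, a (σ i) < y - c / 2)

noncomputable def seqD (a : ℕ → ℝ) (m : ℕ) (y c : ℝ) : ℝ≥0∞ :=
  ⨆ (n : ℕ) (_ : DCert a m y c n), (n : ℝ≥0∞)

noncomputable def seqTV (a : ℕ → ℝ) (m : ℕ) (c : ℝ) : ℝ≥0∞ :=
  ⨆ (n : ℕ) (v : Fin (n + 1) → ℕ) (_ : Monotone v) (_ : ∀ i, v i ≤ m),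
    ∑ i : Fin n, ENNReal.ofReal (|a (v i.succ) - a (v i.castSucc)| - c)

lemma le_seqD {a m y c n} (h : DCert a m y c n) : (n : ℝ≥0∞) ≤ seqD a m y c :=
  le_iSup_of_le n (le_iSup_of_le h le_rfl)

lemma seqD_le {a m y c} {B : ℝ≥0∞} (H : ∀ n, DCert a m y c n → (n : ℝ≥0∞) ≤ B) :
    seqD a m y c ≤ B := iSup₂_le H

lemma seqD_mono_of {a m y c a' m' y' c'}
    (H : ∀ n, DCert a m y c n → DCert a' m' y' c' n) :
    seqD a m y c ≤ seqD a' m' y' c' :=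
  seqD_le fun n h => le_seqD (H n h)

lemma seqD_congr {a b : ℕ → ℝ} {m y c} (h : ∀ k ≤ m, a k = b k) :
    seqD a m y c = seqD b m y c := by
  have : ∀ (a b : ℕ → ℝ), (∀ k ≤ m, a k = b k) → seqD a m y c ≤ seqD b m y c := by
    intro a b h
    refine seqD_mono_of fun n hc => ?_
    obtain ⟨ρ, σ, hb, hint, hρv, hσv⟩ := hc
    refine ⟨ρ, σ, hb, hint, fun i => ?_, fun i => ?_⟩
    · rw [← h _ (le_trans (hb i).1 (hb i).2)]; exact hρv i
    · rw [← h _ (hb i).2]; exact hσv i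
  exact le_antisymm (this a b h) (this b a fun k hk => (h k hk).symm)

lemma le_seqTV {a : ℕ → ℝ} {m : ℕ} {c : ℝ} (n : ℕ) (v : Fin (n+1) → ℕ)
    (h1 : Monotone v) (h2 : ∀ i, v i ≤ m) :
    ∑ i : Fin n, ENNReal.ofReal (|a (v i.succ) - a (v i.castSucc)| - c) ≤ seqTV a m c :=
  le_iSup_of_le n (le_iSup_of_le v (le_iSup_of_le h1 (le_iSup_of_le h2 le_rfl)))

lemma seqTV_le {a : ℕ → ℝ} {m : ℕ} {c : ℝ} {B : ℝ≥0∞}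
    (H : ∀ (n : ℕ) (v : Fin (n+1) → ℕ), Monotone v → (∀ i, v i ≤ m) →
      ∑ i : Fin n, ENNReal.ofReal (|a (v i.succ) - a (v i.castSucc)| - c) ≤ B) :
    seqTV a m c ≤ B :=
  iSup₂_le fun n v => iSup₂_le fun h1 h2 => H n v h1 h2

/-- `seqTV` of a subsampled sequence is at most `seqTV` of the original. -/
lemma seqTV_comp_le {a a' : ℕ → ℝ} {m m' : ℕ} {c : ℝ} (φ : ℕ → ℕ)
    (hφ : ∀ p q, p ≤ q → q ≤ m' → φ p ≤ φ q)
    (hbd : ∀ k ≤ m', φ k ≤ m) (hv : ∀ k ≤ m', a' k = a (φ k)) :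
    seqTV a' m' c ≤ seqTV a m c := by
  refine seqTV_le fun n v h1 h2 => ?_
  have key : ∑ i : Fin n, ENNReal.ofReal (|a' (v i.succ) - a' (v i.castSucc)| - c) =
      ∑ i : Fin n, ENNReal.ofReal (|a ((φ ∘ v) i.succ) - a ((φ ∘ v) i.castSucc)| - c) := by
    refine Finset.sum_congr rfl fun i _ => ?_
    rw [hv _ (h2 _), hv _ (h2 _)]
    rfl
  rw [key]
  exact le_seqTV n (φ ∘ v) (fun p q hpq => hφ _ _ (h1 hpq) (h2 q)) (fun i => hbd _ (h2 i))

/-- Generic interior deletion lemma: deleting a block of `d` indices starting at `K`,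
provided suitable reroutes exist, does not decrease the downcrossing count. -/
lemma seqD_delete (a : ℕ → ℝ) (m K d : ℕ) (y c : ℝ) (hc : 0 < c) (rρ rσ : ℕ → ℕ)
    (hK : 1 ≤ K) (hKd : K + d ≤ m)
    (hρwin : ∀ j, K ≤ j → j < K + d → K - 1 ≤ rρ j ∧ rρ j ≤ K ∧
      a j ≤ (if rρ j < K then a (rρ j) else a (rρ j + d)))
    (hσwin : ∀ j, K ≤ j → j < K + d → K - 1 ≤ rσ j ∧ rσ j ≤ K ∧
      (if rσ j < K then a (rσ j) else a (rσ j + d)) ≤ a j)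
    (hexcl : ∀ p q, K ≤ p → p < q → q < K + d → |a p - a q| ≤ c) :
    seqD a m y c ≤ seqD (fun k => if k < K then a k else a (k + d)) (m - d) y c := by
  classical
  set A : ℕ → ℝ := fun k => if k < K then a k else a (k + d) with hA
  set Rρ : ℕ → ℕ := fun j => if j < K then j else if j < K + d then rρ j else j - d with hRρ
  set Rσ : ℕ → ℕ := fun j => if j < K then j else if j < K + d then rσ j else j - d with hRσ
  refine seqD_mono_of fun n hcert => ?_
  obtain ⟨ρ, σ, hb, hint, hρv, hσv⟩ := hcert
  -- basic facts
  have hval : ∀ i, a (σ i) < a (ρ i) ∧ c < a (ρ i) - a (σ i) := by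
    intro i
    constructor <;> [skip; skip] <;> (have h1 := hρv i; have h2 := hσv i; linarith)
  have hlt : ∀ i, ρ i < σ i := by
    intro i
    rcases lt_or_eq_of_le (hb i).1 with h | h
    · exact h
    · exact absurd (hval i).1 (by rw [h]; exact lt_irrefl _)
  have hintlt : ∀ i j, i < j → σ i < ρ j := by
    intro i j hij
    rcases lt_or_eq_of_le (hint i j hij) with h | h
    · exact h
    · exfalso
      have h1 := hρv j
      have h2 := hσv i
      rw [h] at h2
      linarith
  -- window exclusion: at most one of any ρ-σ or σ-ρ pair lies in window
  have notboth1 : ∀ i, ¬(K ≤ ρ i ∧ ρ i < K + d ∧ K ≤ σ i ∧ σ i < K + d) := by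
    rintro i ⟨h1, h2, h3, h4⟩
    have := hexcl (ρ i) (σ i) h1 (hlt i) h4
    have := (hval i).2
    rw [abs_le] at *
    linarith [(this : _)]
  have notboth2 : ∀ i j, i < j → ¬(K ≤ σ i ∧ σ i < K + d ∧ K ≤ ρ j ∧ ρ j < K + d) := by
    rintro i j hij ⟨h1, h2, h3, h4⟩
    have habs := hexcl (σ i) (ρ j) h1 (hintlt i j hij) h4
    have hv1 := hρv j
    have hv2 := hσv i
    rw [abs_le] at habs
    linarith [habs.1]
  -- bounds on rerouted values
  have hRρbd : ∀ j ≤ m, (j < K → Rρ j = j) ∧ (K ≤ j → j < K + d → K - 1 ≤ Rρ j ∧ Rρ j ≤ K) ∧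
      (K + d ≤ j → Rρ j = j - d) := by
    intro j hj
    refine ⟨fun h => by simp [hRρ, h], fun h1 h2 => ?_, fun h => by
      simp only [hRρ]; rw [if_neg (by omega : ¬ j < K), if_neg (by omega : ¬ j < K + d)]⟩
    have := hρwin j h1 h2
    simp only [hRρ, if_neg (by omega : ¬ j < K), if_pos h2]
    exact ⟨this.1, this.2.1⟩
  have hRσbd : ∀ j ≤ m, (j < K → Rσ j = j) ∧ (K ≤ j → j < K + d → K - 1 ≤ Rσ j ∧ Rσ j ≤ K) ∧
      (K + d ≤ j → Rσ j = j - d) := by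
    intro j hj
    refine ⟨fun h => by simp [hRσ, h], fun h1 h2 => ?_, fun h => by
      simp only [hRσ]; rw [if_neg (by omega : ¬ j < K), if_neg (by omega : ¬ j < K + d)]⟩
    have := hσwin j h1 h2
    simp only [hRσ, if_neg (by omega : ¬ j < K), if_pos h2]
    exact ⟨this.1, this.2.1⟩
  -- generic ordering fact
  have ord : ∀ (R1 R2 : ℕ → ℕ), (∀ j ≤ m, (j < K → R1 j = j) ∧
        (K ≤ j → j < K + d → K - 1 ≤ R1 j ∧ R1 j ≤ K) ∧ (K + d ≤ j → R1 j = j - d)) →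
      (∀ j ≤ m, (j < K → R2 j = j) ∧ (K ≤ j → j < K + d → K - 1 ≤ R2 j ∧ R2 j ≤ K) ∧
        (K + d ≤ j → R2 j = j - d)) →
      ∀ p q, p < q → p ≤ m → q ≤ m → ¬(K ≤ p ∧ p < K + d ∧ K ≤ q ∧ q < K + d) →
        R1 p ≤ R2 q := by
    intro R1 R2 hR1 hR2 p q hpq hpm hqm hnb
    obtain ⟨hp1, hp2, hp3⟩ := hR1 p hpm
    obtain ⟨hq1, hq2, hq3⟩ := hR2 q hqm
    by_cases hqw : K + d ≤ q
    · rw [hq3 hqw]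
      by_cases hpw : p < K
      · rw [hp1 hpw]; omega
      · by_cases hpw2 : p < K + d
        · have := hp2 (by omega) hpw2; omega
        · rw [hp3 (by omega)]; omega
    · by_cases hqw2 : q < K
      · rw [hq1 hqw2, hp1 (by omega)]; omega
      · -- q in window
        have hq := hq2 (by omega) (by omega)
        have hpK : p < K := by
          by_cases h : p < K
          · exact h
          · exact absurd ⟨by omega, by omega, by omega, by omega⟩ hnb
        rw [hp1 hpK]; omega
  refine ⟨Rρ ∘ ρ, Rσ ∘ σ, fun i => ⟨?_, ?_⟩, fun i j hij => ?_, fun i => ?_, fun i => ?_⟩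
  · -- ρ' ≤ σ'
    exact ord Rρ Rσ hRρbd hRσbd (ρ i) (σ i) (hlt i) (le_trans (hb i).1 (hb i).2) (hb i).2
      (notboth1 i)
  · -- σ' ≤ m - d
    obtain ⟨h1, h2, h3⟩ := hRσbd (σ i) (hb i).2
    simp only [Function.comp_apply]
    have hσm := (hb i).2
    by_cases hw : σ i < K
    · rw [h1 hw]; omega
    · by_cases hw2 : σ i < K + d
      · have := h2 (by omega) hw2; omega
      · rw [h3 (by omega)]; omega
  · -- interlacing
    exact ord Rσ Rρ hRσbd hRρbd (σ i) (ρ j) (hintlt i j hij) (hb i).2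
      (le_trans (hb j).1 (hb j).2) (notboth2 i j hij)
  · -- ρ values
    obtain ⟨h1, h2, h3⟩ := hRρbd (ρ i) (le_trans (hb i).1 (hb i).2)
    by_cases hw : ρ i < K
    · rw [Function.comp_apply, h1 hw]
      simp only [hA, if_pos hw]
      exact hρv i
    · by_cases hw2 : ρ i < K + d
      · have hwv := (hρwin (ρ i) (by omega) hw2).2.2
        refine le_trans (le_trans (hρv i) hwv) ?_
        simp only [Function.comp_apply, hA, hRρ, if_neg hw, if_pos hw2]
        exact le_refl _
      · rw [Function.comp_apply, h3 (by omega)]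
        simp only [hA, if_neg (by omega : ¬ ρ i - d < K)]
        rw [(by omega : ρ i - d + d = ρ i)]
        exact hρv i
  · -- σ values
    obtain ⟨h1, h2, h3⟩ := hRσbd (σ i) (hb i).2
    by_cases hw : σ i < K
    · rw [Function.comp_apply, h1 hw]
      simp only [hA, if_pos hw]
      exact hσv i
    · by_cases hw2 : σ i < K + d
      · have hwv := (hσwin (σ i) (by omega) hw2).2.2
        refine lt_of_le_of_lt (le_trans ?_ hwv) (hσv i)
        simp only [Function.comp_apply, hA, hRσ, if_neg hw, if_pos hw2]
        exact le_refl _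
      · rw [Function.comp_apply, h3 (by omega)]
        simp only [hA, if_neg (by omega : ¬ σ i - d < K)]
        rw [(by omega : σ i - d + d = σ i)]
        exact hσv i

lemma cert_strict {a : ℕ → ℝ} {m : ℕ} {y c : ℝ} {n : ℕ} {ρ σ : Fin n → ℕ} (hc : 0 < c)
    (hb : ∀ i, ρ i ≤ σ i ∧ σ i ≤ m) (hint : ∀ i j : Fin n, i < j → σ i ≤ ρ j)
    (hρv : ∀ i, y + c / 2 ≤ a (ρ i)) (hσv : ∀ i, a (σ i) < y - c / 2) :
    (∀ i, ρ i < σ i) ∧ (∀ i j, i < j → σ i < ρ j) := by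
  constructor
  · intro i
    rcases lt_or_eq_of_le (hb i).1 with h | h
    · exact h
    · exfalso; have h1 := hρv i; have h2 := hσv i; rw [h] at h1; linarith
  · intro i j hij
    rcases lt_or_eq_of_le (hint i j hij) with h | h
    · exact h
    · exfalso; have h1 := hρv j; have h2 := hσv i; rw [h] at h2; linarith

/-- Deleting the first point when the first step is small (or upward). -/
lemma seqD_delete_left (a : ℕ → ℝ) (m : ℕ) (y c : ℝ) (hc : 0 < c) (hm : 2 ≤ m)
    (hdown : a 1 < a 0 → a 0 - a 1 ≤ c ∧ a 0 ≤ a 2) :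
    seqD a m y c ≤ seqD (fun k => a (k + 1)) (m - 1) y c := by
  classical
  refine seqD_mono_of fun n hcert => ?_
  obtain ⟨ρ, σ, hb, hint, hρv, hσv⟩ := hcert
  obtain ⟨hlt, hintlt⟩ := cert_strict hc hb hint hρv hσv
  have hσ0 : ∀ i, σ i ≠ 0 := by
    intro i h
    have h0 : ρ i = 0 := by have := (hb i).1; omega
    have h1 := hρv i; have h2 := hσv i
    rw [h0] at h1; rw [h] at h2
    linarith
  set Rρ : ℕ → ℕ := fun j => if j = 0 then (if a 0 ≤ a 1 then 0 else 1) else j - 1 with hRρ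
  refine ⟨Rρ ∘ ρ, fun i => σ i - 1, fun i => ⟨?_, by show σ i - 1 ≤ m - 1; have := (hb i).2; omega⟩,
    fun i j hij => ?_, fun i => ?_, fun i => ?_⟩
  · -- ρ' ≤ σ'
    simp only [Function.comp_apply, hRρ]
    by_cases h0 : ρ i = 0
    · rw [if_pos h0]
      by_cases hup : a 0 ≤ a 1
      · rw [if_pos hup]; omega
      · rw [if_neg hup]
        have hσ1 : σ i ≠ 1 := by
          intro h
          have h1 := hρv i; have h2 := hσv i
          rw [h0] at h1; rw [h] at h2
          have := (hdown (by linarith)).1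
          linarith
        have := hσ0 i; omega
    · rw [if_neg h0]
      have := hlt i; omega
  · -- interlacing
    simp only [Function.comp_apply, hRρ]
    have h1 := hintlt i j hij
    have h2 := hσ0 i
    rw [if_neg (by omega : ¬ ρ j = 0)]
    omega
  · -- ρ values
    simp only [Function.comp_apply, hRρ]
    by_cases h0 : ρ i = 0
    · rw [if_pos h0]
      have h1 := hρv i; rw [h0] at h1
      by_cases hup : a 0 ≤ a 1
      · rw [if_pos hup]; simpa using le_trans h1 hup
      · rw [if_neg hup]
        have := (hdown (by linarith)).2
        simpa using le_trans h1 this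
    · rw [if_neg h0]
      have : ρ i - 1 + 1 = ρ i := by omega
      simpa [this] using hρv i
  · -- σ values
    have : σ i - 1 + 1 = σ i := by have := hσ0 i; omega
    simpa [this] using hσv i

/-- Deleting the last point when the last step is small (or downward-ending-up). -/
lemma seqD_delete_right (a : ℕ → ℝ) (m : ℕ) (y c : ℝ) (hc : 0 < c) (hm : 2 ≤ m)
    (hdown : a m < a (m - 1) → a (m - 1) - a m ≤ c ∧ a (m - 2) ≤ a m) :
    seqD a m y c ≤ seqD a (m - 1) y c := by
  classical
  refine seqD_mono_of fun n hcert => ?_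
  obtain ⟨ρ, σ, hb, hint, hρv, hσv⟩ := hcert
  obtain ⟨hlt, hintlt⟩ := cert_strict hc hb hint hρv hσv
  have hρm : ∀ i, ρ i ≠ m := by
    intro i h
    have h0 : σ i = m := by have h1 := (hb i).1; have h2 := (hb i).2; omega
    have h1 := hρv i; have h2 := hσv i
    rw [h0] at h2; rw [h] at h1
    linarith
  set Rσ : ℕ → ℕ := fun j => if j = m then (if a (m-1) ≤ a m then m-1 else m-2) else j with hRσ
  refine ⟨ρ, Rσ ∘ σ, fun i => ⟨?_, ?_⟩, fun i j hij => ?_, hρv, fun i => ?_⟩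
  · -- ρ ≤ σ'
    simp only [Function.comp_apply, hRσ]
    by_cases h0 : σ i = m
    · rw [if_pos h0]
      by_cases hup : a (m-1) ≤ a m
      · rw [if_pos hup]
        have := hρm i; have := hlt i; omega
      · rw [if_neg hup]
        have hρ1 : ρ i ≠ m - 1 := by
          intro h
          have h1 := hρv i; have h2 := hσv i
          rw [h0] at h2; rw [h] at h1
          have := (hdown (by linarith)).1
          linarith
        have := hρm i; have := hlt i; omega
    · rw [if_neg h0]
      exact (hb i).1
  · -- bound
    simp only [Function.comp_apply, hRσ]
    by_cases h0 : σ i = m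
    · rw [if_pos h0]; split <;> omega
    · rw [if_neg h0]; have := (hb i).2; omega
  · -- interlacing
    simp only [Function.comp_apply, hRσ]
    by_cases h0 : σ i = m
    · exfalso
      have h1 := hintlt i j hij
      have := hρm j
      have := (hb j).1
      have := (hb j).2
      omega
    · rw [if_neg h0]
      exact hint i j hij
  · -- σ values
    simp only [Function.comp_apply, hRσ]
    by_cases h0 : σ i = m
    · rw [if_pos h0]
      have h2 := hσv i; rw [h0] at h2
      by_cases hup : a (m-1) ≤ a m
      · rw [if_pos hup]; linarith
      · rw [if_neg hup]
        have := (hdown (by linarith)).2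
        linarith
    · rw [if_neg h0]
      exact hσv i

open MeasureTheory in
lemma seqD_le_card (a : ℕ → ℝ) (m : ℕ) (y c : ℝ) (hc : 0 < c)
    (hbig : ∀ k, k + 1 ≤ m → c < |a (k + 1) - a k|)
    (halt : ∀ k, k + 2 ≤ m → (a (k + 1) - a k) * (a (k + 2) - a (k + 1)) < 0) :
    seqD a m y c ≤
      (((Finset.range m).filter fun k => y + c / 2 ≤ a k ∧ a (k + 1) < y - c / 2).card
        : ℝ≥0∞) := by
  classical
  refine seqD_le fun n hcert => ?_
  obtain ⟨ρ, σ, hb, hint, hρv, hσv⟩ := hcert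
  obtain ⟨hlt, hintlt⟩ := cert_strict hc hb hint hρv hσv
  set P : Fin n → ℕ → Prop := fun i k => ρ i ≤ k ∧ y + c / 2 ≤ a k with hP
  set g : Fin n → ℕ := fun i => Nat.findGreatest (P i) (σ i - 1) with hg
  have hgspec : ∀ i, P i (g i) := by
    intro i
    exact Nat.findGreatest_spec (m := ρ i) (by have := hlt i; omega) ⟨le_refl _, hρv i⟩
  have hgle : ∀ i, g i ≤ σ i - 1 := fun i => Nat.findGreatest_le _
  have hgmax : ∀ i k, g i < k → k ≤ σ i - 1 → ¬ P i k := by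
    intro i k h1 h2
    simp only [hg] at h1
    exact Nat.findGreatest_is_greatest h1 h2
  have hstep : ∀ i, a (g i + 1) < y - c / 2 := by
    intro i
    have hσm := (hb i).2
    have hlti := hlt i
    by_cases h1 : g i + 1 = σ i
    · rw [h1]; exact hσv i
    · have hgub := hgle i
      have h2 : g i + 1 ≤ σ i - 1 := by omega
      have hnp : ¬ P i (g i + 1) := hgmax i _ (by omega) h2
      have h3 : a (g i + 1) < y + c / 2 := by
        by_contra h4
        exact hnp ⟨by have := (hgspec i).1; omega, by linarith⟩
      by_contra h4
      push_neg at h4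
      -- a (g i + 1) is in the middle band; next step must go up past y + c/2
      have hd : a (g i + 1) < a (g i) := by
        have := (hgspec i).2; linarith
      have hm2 : g i + 2 ≤ m := by omega
      have halt1 := halt (g i) hm2
      have hup : 0 < a (g i + 2) - a (g i + 1) := by
        nlinarith [halt1, hd]
      have hbig1 := hbig (g i + 1) (by omega)
      rw [abs_of_pos (by linarith : (0:ℝ) < a (g i + 1 + 1) - a (g i + 1))] at hbig1
      have hP2 : y + c / 2 ≤ a (g i + 2) := by
        have : a (g i + 2) = a (g i + 1 + 1) := by norm_num
        rw [this]; linarith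
      by_cases h5 : g i + 2 = σ i
      · have := hσv i
        rw [← h5] at this
        linarith
      · have h6 : g i + 2 ≤ σ i - 1 := by omega
        exact hgmax i _ (by omega) h6 ⟨by have := (hgspec i).1; omega, hP2⟩
  have hmaps : ∀ i : Fin n, g i ∈
      (Finset.range m).filter fun k => y + c / 2 ≤ a k ∧ a (k + 1) < y - c / 2 := by
    intro i
    rw [Finset.mem_filter, Finset.mem_range]
    refine ⟨?_, (hgspec i).2, hstep i⟩
    have := hgle i
    have := (hb i).2
    have := hlt i
    omega
  have hginj : ∀ i j : Fin n, i < j → g i < g j := by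
    intro i j hij
    have h1 := hgle i
    have h2 := hintlt i j hij
    have h3 := (hgspec j).1
    have := hlt i
    omega
  have hcard : n ≤
      ((Finset.range m).filter fun k => y + c / 2 ≤ a k ∧ a (k + 1) < y - c / 2).card := by
    have hinj : Set.InjOn g (Finset.univ : Finset (Fin n)) := by
      intro i _ j _ hgij
      by_contra hne
      rcases lt_or_gt_of_ne hne with h | h
      · exact absurd hgij (ne_of_lt (hginj i j h))
      · exact absurd hgij.symm (ne_of_lt (hginj j i h))
    simpa using Finset.card_le_card_of_injOn g (fun i _ => hmaps i) hinj
  exact_mod_cast hcard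

open MeasureTheory in
/-- The base case: strictly alternating sequences with all steps `> c`. -/
lemma alt_case (a : ℕ → ℝ) (m : ℕ) (c : ℝ) (hc : 0 < c)
    (hbig : ∀ k, k + 1 ≤ m → c < |a (k + 1) - a k|)
    (halt : ∀ k, k + 2 ≤ m → (a (k + 1) - a k) * (a (k + 2) - a (k + 1)) < 0) :
    ∫⁻ y : ℝ, (seqD (fun k => -a k) m (-y) c + seqD a m y c) ≤ seqTV a m c := by
  classical
  set J : ℕ → Set ℝ := fun k =>
    if a (k + 1) < a k then Set.Ioc (a (k + 1) + c / 2) (a k - c / 2)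
    else Set.Ico (a k + c / 2) (a (k + 1) - c / 2) with hJ
  have hJm : ∀ k, MeasurableSet (J k) := by
    intro k
    simp only [hJ]
    split
    · exact measurableSet_Ioc
    · exact measurableSet_Ico
  have hneg_big : ∀ k, k + 1 ≤ m → c < |(fun k => -a k) (k + 1) - (fun k => -a k) k| := by
    intro k hk
    have := hbig k hk
    rw [show (fun k => -a k) (k + 1) - (fun k => -a k) k = -(a (k+1) - a k) by ring, abs_neg]
    exact this
  have hneg_alt : ∀ k, k + 2 ≤ m →
      ((fun k => -a k) (k + 1) - (fun k => -a k) k) *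
        ((fun k => -a k) (k + 2) - (fun k => -a k) (k + 1)) < 0 := by
    intro k hk
    have := halt k hk
    dsimp only
    nlinarith [this]
  have hpt : ∀ y : ℝ, seqD (fun k => -a k) m (-y) c + seqD a m y c ≤
      ∑ k ∈ Finset.range m, (J k).indicator (fun _ => (1 : ℝ≥0∞)) y := by
    intro y
    have hD := seqD_le_card a m y c hc hbig halt
    have hU := seqD_le_card (fun k => -a k) m (-y) c hc hneg_big hneg_alt
    refine le_trans (add_le_add hU hD) ?_
    have cardsum : ∀ (p : ℕ → Prop) [DecidablePred p],
        (((Finset.range m).filter p).card : ℝ≥0∞) =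
          ∑ k ∈ Finset.range m, (if p k then 1 else 0) := by
      intro p _
      rw [Finset.card_eq_sum_ones, ← Finset.sum_filter]
      push_cast
      rfl
    rw [cardsum, cardsum, ← Finset.sum_add_distrib]
    refine Finset.sum_le_sum fun k hk => ?_
    rw [Set.indicator_apply]
    by_cases hd : a (k + 1) < a k
    · have hJk : y ∈ J k ↔ (y + c / 2 ≤ a k ∧ a (k + 1) < y - c / 2) := by
        simp only [hJ, if_pos hd, Set.mem_Ioc]
        constructor <;> rintro ⟨h1, h2⟩ <;> constructor <;> linarith
      by_cases hU : -y + c / 2 ≤ (fun k => -a k) k ∧ (fun k => -a k) (k + 1) < -y - c / 2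
      · exfalso
        simp only at hU
        obtain ⟨h1, h2⟩ := hU
        have : a (k+1) > a k := by linarith
        linarith
      · rw [if_neg hU, zero_add]
        by_cases hDk : y + c / 2 ≤ a k ∧ a (k + 1) < y - c / 2
        · rw [if_pos hDk, if_pos (hJk.2 hDk)]
        · rw [if_neg hDk]
          split <;> simp
    · have hJk : y ∈ J k ↔
          (-y + c / 2 ≤ (fun k => -a k) k ∧ (fun k => -a k) (k + 1) < -y - c / 2) := by
        simp only [hJ, if_neg hd, Set.mem_Ico]
        constructor <;> rintro ⟨h1, h2⟩ <;> constructor <;> simp at * <;> linarith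
      by_cases hDk : y + c / 2 ≤ a k ∧ a (k + 1) < y - c / 2
      · exfalso
        obtain ⟨h1, h2⟩ := hDk
        rw [not_lt] at hd
        linarith
      · rw [if_neg hDk, add_zero]
        by_cases hUk : -y + c / 2 ≤ (fun k => -a k) k ∧ (fun k => -a k) (k + 1) < -y - c / 2
        · rw [if_pos hUk, if_pos (hJk.2 hUk)]
        · rw [if_neg hUk]
          split <;> simp
  calc ∫⁻ y : ℝ, (seqD (fun k => -a k) m (-y) c + seqD a m y c)
      ≤ ∫⁻ y, ∑ k ∈ Finset.range m, (J k).indicator (fun _ => (1 : ℝ≥0∞)) y :=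
        lintegral_mono hpt
    _ = ∑ k ∈ Finset.range m, volume (J k) := by
        rw [lintegral_finset_sum _ (fun k _ => measurable_const.indicator (hJm k))]
        refine Finset.sum_congr rfl fun k _ => ?_
        rw [lintegral_indicator_const (hJm k), one_mul]
    _ = ∑ k ∈ Finset.range m, ENNReal.ofReal (|a (k + 1) - a k| - c) := by
        refine Finset.sum_congr rfl fun k _ => ?_
        simp only [hJ]
        split <;> rename_i h
        · rw [Real.volume_Ioc]
          congr 1
          rw [abs_of_neg (by linarith)]
          ring
        · rw [Real.volume_Ico]
          congr 1
          rw [abs_of_nonneg (by linarith [not_lt.1 h])]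
          ring
    _ ≤ seqTV a m c := by
        have := le_seqTV (a := a) (m := m) (c := c) m (fun i => (i : ℕ))
          (fun p q hpq => hpq) (fun i => Nat.lt_succ_iff.mp i.isLt)
        refine le_trans (le_of_eq ?_) this
        rw [← Fin.sum_univ_eq_sum_range (fun k => ENNReal.ofReal (|a (k + 1) - a k| - c)) m]
        refine Finset.sum_congr rfl fun i _ => ?_
        congr 2 <;> simp

lemma seqD_zero {b : ℕ → ℝ} {m : ℕ} {y c : ℝ} (hc : 0 < c)
    (h : ∀ p q, p ≤ q → q ≤ m → b p - b q ≤ c) : seqD b m y c = 0 := by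
  refine le_antisymm (seqD_le fun n hcert => ?_) zero_le
  obtain ⟨ρ, σ, hb, hint, hρv, hσv⟩ := hcert
  rcases Nat.eq_zero_or_pos n with h0 | h0
  · simp [h0]
  · exfalso
    have i : Fin n := ⟨0, h0⟩
    have h1 := hρv i
    have h2 := hσv i
    have h3 := h (ρ i) (σ i) (hb i).1 (hb i).2
    linarith

set_option maxHeartbeats 2000000 in
open MeasureTheory in
theorem core_seq (c : ℝ) (hc : 0 < c) : ∀ (m : ℕ) (a : ℕ → ℝ),
    ∫⁻ y : ℝ, (seqD (fun k => -a k) m (-y) c + seqD a m y c) ≤ seqTV a m c := by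
  intro m
  induction m using Nat.strong_induction_on with
  | _ m IH =>
  intro a
  classical
  rcases Nat.eq_zero_or_pos m with hm0 | hm0
  · subst hm0
    have h1 : ∀ y : ℝ, seqD (fun k => -a k) 0 (-y) c = 0 := fun y =>
      seqD_zero hc (fun p q hpq hq => by
        have hp : p = 0 := by omega
        have hq0 : q = 0 := by omega
        subst hp; subst hq0; simp; linarith)
    have h2 : ∀ y : ℝ, seqD a 0 y c = 0 := fun y =>
      seqD_zero hc (fun p q hpq hq => by
        have hp : p = 0 := by omega
        have hq0 : q = 0 := by omega
        subst hp; subst hq0; simp; linarith)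
    simp only [h1, h2, add_zero]
    simp
  by_cases hA : ∃ K, 1 ≤ K ∧ K + 1 ≤ m ∧ (a (K - 1) - a K) * (a (K + 1) - a K) ≤ 0
  · -- delete a monotone interior point
    obtain ⟨K, hK1, hK2, hKb⟩ := hA
    set a' : ℕ → ℝ := fun k => if k < K then a k else a (k + 1) with ha'
    have hdelD : ∀ y : ℝ, seqD a m y c ≤ seqD a' (m - 1) y c := by
      intro y
      refine seqD_delete a m K 1 y c hc
        (fun _ => if a K ≤ a (K+1) then K else K - 1)
        (fun _ => if a (K+1) ≤ a K then K else K - 1) hK1 hK2 ?_ ?_ (fun p q h1 h2 h3 => by omega)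
      · intro j hj1 hj2
        have hjK : j = K := by omega
        subst hjK
        by_cases hup : a j ≤ a (j+1)
        · rw [if_pos hup]
          exact ⟨by omega, le_refl _, by rw [if_neg (lt_irrefl j)]; exact hup⟩
        · rw [if_neg hup]
          refine ⟨le_refl _, by omega, ?_⟩
          rw [if_pos (by omega : j - 1 < j)]
          nlinarith [hKb]
      · intro j hj1 hj2
        have hjK : j = K := by omega
        subst hjK
        by_cases hup : a (j+1) ≤ a j
        · rw [if_pos hup]
          exact ⟨by omega, le_refl _, by rw [if_neg (lt_irrefl j)]; exact hup⟩
        · rw [if_neg hup]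
          refine ⟨le_refl _, by omega, ?_⟩
          rw [if_pos (by omega : j - 1 < j)]
          nlinarith [hKb]
    have hdelU : ∀ y : ℝ, seqD (fun k => -a k) m (-y) c ≤
        seqD (fun k => -a' k) (m - 1) (-y) c := by
      intro y
      have step := seqD_delete (fun k => -a k) m K 1 (-y) c hc
        (fun _ => if -a K ≤ -a (K+1) then K else K - 1)
        (fun _ => if -a (K+1) ≤ -a K then K else K - 1) hK1 hK2 ?_ ?_
        (fun p q h1 h2 h3 => by omega)
      · refine le_trans step (le_of_eq (seqD_congr fun k hk => ?_))
        simp only [ha']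
        by_cases h : k < K <;> simp [h]
      · intro j hj1 hj2
        have hjK : j = K := by omega
        subst hjK
        by_cases hup : -a j ≤ -a (j+1)
        · rw [if_pos hup]
          exact ⟨by omega, le_refl _, by rw [if_neg (lt_irrefl j)]; exact hup⟩
        · rw [if_neg hup]
          refine ⟨le_refl _, by omega, ?_⟩
          rw [if_pos (by omega : j - 1 < j)]
          simp only [neg_le_neg_iff]
          nlinarith [hKb]
      · intro j hj1 hj2
        have hjK : j = K := by omega
        subst hjK
        by_cases hup : -a (j+1) ≤ -a j
        · rw [if_pos hup]
          exact ⟨by omega, le_refl _, by rw [if_neg (lt_irrefl j)]; exact hup⟩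
        · rw [if_neg hup]
          refine ⟨le_refl _, by omega, ?_⟩
          rw [if_pos (by omega : j - 1 < j)]
          simp only [neg_le_neg_iff]
          nlinarith [hKb]
    calc ∫⁻ y : ℝ, (seqD (fun k => -a k) m (-y) c + seqD a m y c)
        ≤ ∫⁻ y : ℝ, (seqD (fun k => -a' k) (m - 1) (-y) c + seqD a' (m - 1) y c) :=
          lintegral_mono fun y => add_le_add (hdelU y) (hdelD y)
      _ ≤ seqTV a' (m - 1) c := IH (m - 1) (by omega) a'
      _ ≤ seqTV a m c := by
          refine seqTV_comp_le (fun k => if k < K then k else k + 1)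
            (fun p q hpq hq => by split <;> split <;> omega)
            (fun k hk => by split <;> omega) (fun k hk => ?_)
          simp only [ha']
          split <;> rfl
  · push_neg at hA
    by_cases hB : ∀ k, k + 1 ≤ m → c < |a (k + 1) - a k|
    · -- alternating, all steps big
      refine alt_case a m c hc hB fun k hk => ?_
      have h := hA (k + 1) (by omega) (by omega)
      have e : k + 1 - 1 = k := by omega
      rw [e] at h
      nlinarith [h]
    · -- there is a small step: find the minimal step
      push_neg at hB
      obtain ⟨k0, hk0m, hk0min⟩ := Finset.exists_min_image (Finset.range m)
        (fun k => |a (k + 1) - a k|) ⟨0, Finset.mem_range.2 hm0⟩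
      rw [Finset.mem_range] at hk0m
      obtain ⟨kb, hkb1, hkb2⟩ := hB
      have hsmall : |a (k0 + 1) - a k0| ≤ c :=
        le_trans (hk0min kb (Finset.mem_range.2 (by omega))) hkb2
      rcases Nat.lt_or_ge m 2 with hm1 | hm2
      · -- m = 1
        have hm : m = 1 := by omega
        subst hm
        have habs : ∀ p q, p ≤ q → q ≤ 1 → a p - a q ≤ c ∧ a q - a p ≤ c := by
          intro p q hpq hq
          have h01 : k0 = 0 := by omega
          rw [h01] at hsmall
          rw [abs_le] at hsmall
          have hcase : (p = 0 ∧ q = 0) ∨ (p = 0 ∧ q = 1) ∨ (p = 1 ∧ q = 1) := by omega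
          rcases hcase with ⟨h1, h2⟩ | ⟨h1, h2⟩ | ⟨h1, h2⟩ <;> subst h1 <;> subst h2 <;>
            constructor <;> linarith
        have h1 : ∀ y : ℝ, seqD (fun k => -a k) 1 (-y) c = 0 := fun y =>
          seqD_zero hc fun p q hpq hq => by
            have := habs p q hpq hq; show -a p - -a q ≤ c; linarith [this.2]
        have h2 : ∀ y : ℝ, seqD a 1 y c = 0 := fun y =>
          seqD_zero hc fun p q hpq hq => by linarith [(habs p q hpq hq).1]
        simp only [h1, h2, add_zero]
        simp
      · -- m ≥ 2
        have habs := abs_le.1 hsmall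
        by_cases hk0i : 1 ≤ k0 ∧ k0 + 2 ≤ m
        · -- interior wiggle
          obtain ⟨hk01, hk02⟩ := hk0i
          have e1 : k0 - 1 + 1 = k0 := by omega
          have hAk0 := hA k0 hk01 (by omega)
          have hAk1 := hA (k0 + 1) (by omega) (by omega)
          have e2 : k0 + 1 - 1 = k0 := by omega
          rw [e2] at hAk1
          have hmin1 := hk0min (k0 - 1) (Finset.mem_range.2 (by omega))
          rw [e1] at hmin1
          have hmin2 := hk0min (k0 + 1) (Finset.mem_range.2 (by omega))
          set a' : ℕ → ℝ := fun k => if k < k0 then a k else a (k + 2) with ha'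
          have hexcl : ∀ p q : ℕ, k0 ≤ p → p < q → q < k0 + 2 → |a p - a q| ≤ c := by
            intro p q h1 h2 h3
            have hp : p = k0 := by omega
            have hq : q = k0 + 1 := by omega
            subst hp; subst hq
            rw [abs_sub_comm]
            exact hsmall
          have hexcl' : ∀ p q : ℕ, k0 ≤ p → p < q → q < k0 + 2 →
              |(fun k => -a k) p - (fun k => -a k) q| ≤ c := by
            intro p q h1 h2 h3
            dsimp only
            rw [show -a p - -a q = -(a p - a q) by ring, abs_neg]
            exact hexcl p q h1 h2 h3
          rcases lt_or_gt_of_ne (fun he : a k0 = a (k0 + 1) => by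
              rw [he] at hAk0; simp at hAk0) with hup | hdn
          · -- a k0 < a (k0+1)
            have hAB : a k0 < a (k0 - 1) := by nlinarith [hAk0]
            have habsm : |a k0 - a (k0 - 1)| = a (k0 - 1) - a k0 := by
              rw [abs_of_neg (by linarith)]; ring
            rw [habsm] at hmin1
            have hl : a (k0 + 1) ≤ a (k0 - 1) := by
              have := le_abs_self (a (k0 + 1) - a k0)
              linarith
            have hDC : a (k0 + 2) < a (k0 + 1) := by nlinarith [hAk1]
            have habsm2 : |a (k0 + 1 + 1) - a (k0 + 1)| = a (k0 + 1) - a (k0 + 2) := by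
              rw [show k0 + 1 + 1 = k0 + 2 by omega, abs_of_neg (by linarith)]; ring
            rw [habsm2] at hmin2
            have hr : a (k0 + 2) ≤ a k0 := by
              have := le_abs_self (a (k0 + 1) - a k0)
              linarith
            have hdelD : ∀ y : ℝ, seqD a m y c ≤ seqD a' (m - 2) y c := by
              intro y
              refine seqD_delete a m k0 2 y c hc (fun _ => k0 - 1) (fun _ => k0)
                hk01 (by omega) ?_ ?_ hexcl
              · intro j hj1 hj2
                refine ⟨by omega, by omega, ?_⟩
                rw [if_pos (by omega : k0 - 1 < k0)]
                have : j = k0 ∨ j = k0 + 1 := by omega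
                rcases this with h | h <;> subst h <;> linarith
              · intro j hj1 hj2
                refine ⟨by omega, by omega, ?_⟩
                rw [if_neg (lt_irrefl k0)]
                have : j = k0 ∨ j = k0 + 1 := by omega
                rcases this with h | h <;> subst h <;> linarith
            have hdelU : ∀ y : ℝ, seqD (fun k => -a k) m (-y) c ≤
                seqD (fun k => -a' k) (m - 2) (-y) c := by
              intro y
              have step := seqD_delete (fun k => -a k) m k0 2 (-y) c hc
                (fun _ => k0) (fun _ => k0 - 1) hk01 (by omega) ?_ ?_ hexcl'
              · refine le_trans step (le_of_eq (seqD_congr fun k hk => ?_))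
                simp only [ha']
                by_cases h : k < k0 <;> simp [h]
              · intro j hj1 hj2
                refine ⟨by omega, by omega, ?_⟩
                rw [if_neg (lt_irrefl k0)]
                have : j = k0 ∨ j = k0 + 1 := by omega
                rcases this with h | h <;> subst h <;> simp only [neg_le_neg_iff] <;> linarith
              · intro j hj1 hj2
                refine ⟨by omega, by omega, ?_⟩
                rw [if_pos (by omega : k0 - 1 < k0)]
                have : j = k0 ∨ j = k0 + 1 := by omega
                rcases this with h | h <;> subst h <;> simp only [neg_le_neg_iff] <;> linarith
            calc ∫⁻ y : ℝ, (seqD (fun k => -a k) m (-y) c + seqD a m y c)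
                ≤ ∫⁻ y : ℝ, (seqD (fun k => -a' k) (m - 2) (-y) c + seqD a' (m - 2) y c) :=
                  lintegral_mono fun y => add_le_add (hdelU y) (hdelD y)
              _ ≤ seqTV a' (m - 2) c := IH (m - 2) (by omega) a'
              _ ≤ seqTV a m c := by
                  refine seqTV_comp_le (fun k => if k < k0 then k else k + 2)
                    (fun p q hpq hq => by split <;> split <;> omega)
                    (fun k hk => by split <;> omega) (fun k hk => ?_)
                  simp only [ha']
                  split <;> rfl
          · -- a (k0+1) < a k0
            have hAB : a (k0 - 1) < a k0 := by nlinarith [hAk0]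
            have habsm : |a k0 - a (k0 - 1)| = a k0 - a (k0 - 1) := by
              rw [abs_of_pos (by linarith)]
            rw [habsm] at hmin1
            have hl : a (k0 - 1) ≤ a (k0 + 1) := by
              have := neg_abs_le (a (k0 + 1) - a k0)
              linarith
            have hDC : a (k0 + 1) < a (k0 + 2) := by nlinarith [hAk1]
            have habsm2 : |a (k0 + 1 + 1) - a (k0 + 1)| = a (k0 + 2) - a (k0 + 1) := by
              rw [show k0 + 1 + 1 = k0 + 2 by omega, abs_of_pos (by linarith)]
            rw [habsm2] at hmin2
            have hr : a k0 ≤ a (k0 + 2) := by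
              have := neg_abs_le (a (k0 + 1) - a k0)
              linarith
            have hdelD : ∀ y : ℝ, seqD a m y c ≤ seqD a' (m - 2) y c := by
              intro y
              refine seqD_delete a m k0 2 y c hc (fun _ => k0) (fun _ => k0 - 1)
                hk01 (by omega) ?_ ?_ hexcl
              · intro j hj1 hj2
                refine ⟨by omega, by omega, ?_⟩
                rw [if_neg (lt_irrefl k0)]
                have : j = k0 ∨ j = k0 + 1 := by omega
                rcases this with h | h <;> subst h <;> linarith
              · intro j hj1 hj2
                refine ⟨by omega, by omega, ?_⟩
                rw [if_pos (by omega : k0 - 1 < k0)]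
                have : j = k0 ∨ j = k0 + 1 := by omega
                rcases this with h | h <;> subst h <;> linarith
            have hdelU : ∀ y : ℝ, seqD (fun k => -a k) m (-y) c ≤
                seqD (fun k => -a' k) (m - 2) (-y) c := by
              intro y
              have step := seqD_delete (fun k => -a k) m k0 2 (-y) c hc
                (fun _ => k0 - 1) (fun _ => k0) hk01 (by omega) ?_ ?_ hexcl'
              · refine le_trans step (le_of_eq (seqD_congr fun k hk => ?_))
                simp only [ha']
                by_cases h : k < k0 <;> simp [h]
              · intro j hj1 hj2
                refine ⟨by omega, by omega, ?_⟩
                rw [if_pos (by omega : k0 - 1 < k0)]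
                have : j = k0 ∨ j = k0 + 1 := by omega
                rcases this with h | h <;> subst h <;> simp only [neg_le_neg_iff] <;> linarith
              · intro j hj1 hj2
                refine ⟨by omega, by omega, ?_⟩
                rw [if_neg (lt_irrefl k0)]
                have : j = k0 ∨ j = k0 + 1 := by omega
                rcases this with h | h <;> subst h <;> simp only [neg_le_neg_iff] <;> linarith
            calc ∫⁻ y : ℝ, (seqD (fun k => -a k) m (-y) c + seqD a m y c)
                ≤ ∫⁻ y : ℝ, (seqD (fun k => -a' k) (m - 2) (-y) c + seqD a' (m - 2) y c) :=
                  lintegral_mono fun y => add_le_add (hdelU y) (hdelD y)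
              _ ≤ seqTV a' (m - 2) c := IH (m - 2) (by omega) a'
              _ ≤ seqTV a m c := by
                  refine seqTV_comp_le (fun k => if k < k0 then k else k + 2)
                    (fun p q hpq hq => by split <;> split <;> omega)
                    (fun k hk => by split <;> omega) (fun k hk => ?_)
                  simp only [ha']
                  split <;> rfl
        · by_cases hk00 : k0 = 0
          · -- left boundary
            subst hk00
            have hA1 := hA 1 (le_refl 1) (by omega)
            simp only [Nat.sub_self] at hA1
            have hmin1 := hk0min 1 (Finset.mem_range.2 (by omega))
            have hdelD : ∀ y : ℝ, seqD a m y c ≤ seqD (fun k => a (k + 1)) (m - 1) y c := by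
              intro y
              refine seqD_delete_left a m y c hc hm2 fun h => ⟨by linarith [habs.2], ?_⟩
              have h2 : a 1 < a 2 := by nlinarith [hA1]
              have he2 : |a 2 - a 1| = a 2 - a 1 := abs_of_pos (by linarith)
              rw [he2] at hmin1
              have := neg_abs_le (a (0 + 1) - a 0)
              norm_num at this hmin1 ⊢
              linarith
            have hdelU : ∀ y : ℝ, seqD (fun k => -a k) m (-y) c ≤
                seqD (fun k => -a (k + 1)) (m - 1) (-y) c := by
              intro y
              refine seqD_delete_left (fun k => -a k) m (-y) c hc hm2 fun h => ?_
              have h' : a 0 < a 1 := by linarith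
              refine ⟨by linarith [habs.1], ?_⟩
              have h2 : a 2 < a 1 := by nlinarith [hA1]
              have he2 : |a 2 - a 1| = a 1 - a 2 := by rw [abs_of_neg (by linarith)]; ring
              rw [he2] at hmin1
              have := le_abs_self (a 1 - a 0)
              simp only [neg_le_neg_iff]
              linarith
            calc ∫⁻ y : ℝ, (seqD (fun k => -a k) m (-y) c + seqD a m y c)
                ≤ ∫⁻ y : ℝ, (seqD (fun k => -a (k + 1)) (m - 1) (-y) c +
                    seqD (fun k => a (k + 1)) (m - 1) y c) :=
                  lintegral_mono fun y => add_le_add (hdelU y) (hdelD y)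
              _ ≤ seqTV (fun k => a (k + 1)) (m - 1) c := IH (m - 1) (by omega) _
              _ ≤ seqTV a m c :=
                  seqTV_comp_le (fun k => k + 1) (fun p q hpq hq => by omega)
                    (fun k hk => by omega) (fun k hk => rfl)
          · -- right boundary
            have hk0e : k0 = m - 1 := by omega
            subst hk0e
            have em : m - 1 + 1 = m := by omega
            rw [em] at hsmall habs
            have hAm := hA (m - 1) (by omega) (by omega)
            rw [em, (by omega : m - 1 - 1 = m - 2)] at hAm
            have hminm := hk0min (m - 2) (Finset.mem_range.2 (by omega))
            rw [em, (by omega : m - 2 + 1 = m - 1)] at hminm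
            have hdelD : ∀ y : ℝ, seqD a m y c ≤ seqD a (m - 1) y c := by
              intro y
              refine seqD_delete_right a m y c hc hm2 fun h => ⟨by linarith [habs.1], ?_⟩
              have h2 : a (m - 2) < a (m - 1) := by nlinarith [hAm]
              have he2 : |a (m - 1) - a (m - 2)| = a (m - 1) - a (m - 2) :=
                abs_of_pos (by linarith)
              rw [he2] at hminm
              have := neg_abs_le (a m - a (m - 1))
              linarith
            have hdelU : ∀ y : ℝ, seqD (fun k => -a k) m (-y) c ≤
                seqD (fun k => -a k) (m - 1) (-y) c := by
              intro y
              refine seqD_delete_right (fun k => -a k) m (-y) c hc hm2 fun h => ?_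
              have h' : a (m - 1) < a m := by linarith
              refine ⟨by linarith [habs.2], ?_⟩
              have h2 : a (m - 1) < a (m - 2) := by nlinarith [hAm]
              have he2 : |a (m - 1) - a (m - 2)| = a (m - 2) - a (m - 1) := by
                rw [abs_of_neg (by linarith)]; ring
              rw [he2] at hminm
              have := le_abs_self (a m - a (m - 1))
              simp only [neg_le_neg_iff]
              linarith
            calc ∫⁻ y : ℝ, (seqD (fun k => -a k) m (-y) c + seqD a m y c)
                ≤ ∫⁻ y : ℝ, (seqD (fun k => -a k) (m - 1) (-y) c + seqD a (m - 1) y c) :=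
                  lintegral_mono fun y => add_le_add (hdelU y) (hdelD y)
              _ ≤ seqTV a (m - 1) c := IH (m - 1) (by omega) a
              _ ≤ seqTV a m c :=
                  seqTV_comp_le (fun k => k) (fun p q hpq hq => hpq)
                    (fun k hk => by omega) (fun k hk => rfl)

lemma le_downcross {x : ℝ → ℝ} {y c s t : ℝ} {n : ℕ}
    (h : ∃ ρ σ : Fin n → ℝ,
      (∀ i, s ≤ ρ i ∧ ρ i ≤ σ i ∧ σ i ≤ t) ∧
      (∀ i j : Fin n, i < j → σ i ≤ ρ j) ∧
      (∀ i, y + c / 2 ≤ x (ρ i)) ∧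
      (∀ i, x (σ i) < y - c / 2)) : (n : ℝ≥0∞) ≤ downcross x y c s t :=
  le_iSup_of_le n (le_iSup_of_le h le_rfl)

lemma downcross_le {x : ℝ → ℝ} {y c s t : ℝ} {B : ℝ≥0∞}
    (H : ∀ n, (∃ ρ σ : Fin n → ℝ,
      (∀ i, s ≤ ρ i ∧ ρ i ≤ σ i ∧ σ i ≤ t) ∧
      (∀ i j : Fin n, i < j → σ i ≤ ρ j) ∧
      (∀ i, y + c / 2 ≤ x (ρ i)) ∧
      (∀ i, x (σ i) < y - c / 2)) → (n : ℝ≥0∞) ≤ B) :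
    downcross x y c s t ≤ B := iSup₂_le H

/-- Transfer: crossing counts of a path are bounded by those of a sampled sequence,
with a loss in the parameter `c`. -/
lemma downcross_le_seqD {x : ℝ → ℝ} {a : ℕ → ℝ} {f : ℝ → ℕ} {m : ℕ} {s t y c δ : ℝ}
    (hf : ∀ ⦃p q⦄, s ≤ p → p ≤ q → q ≤ t → f p ≤ f q)
    (hfm : ∀ ⦃τ⦄, s ≤ τ → τ ≤ t → f τ ≤ m)
    (happ : ∀ ⦃τ⦄, s ≤ τ → τ ≤ t → |x τ - a (f τ)| ≤ 2 * δ) :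
    downcross x y c s t ≤ seqD a m y (c - 4 * δ) := by
  refine downcross_le fun n h => ?_
  obtain ⟨ρ, σ, hord, hint, hρ, hσ⟩ := h
  refine le_seqD (n := n) ⟨fun i => f (ρ i), fun i => f (σ i), ?_, ?_, ?_, ?_⟩
  · intro i
    obtain ⟨h1, h2, h3⟩ := hord i
    exact ⟨hf h1 h2 h3, hfm (le_trans h1 h2) h3⟩
  · intro i j hij
    obtain ⟨h1i, h2i, h3i⟩ := hord i
    obtain ⟨h1j, h2j, h3j⟩ := hord j
    exact hf (le_trans h1i h2i) (hint i j hij) (le_trans h2j h3j)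
  · intro i
    obtain ⟨h1, h2, h3⟩ := hord i
    have := happ h1 (le_trans h2 h3)
    have h4 := hρ i
    have := abs_le.1 this
    linarith [this.1, this.2]
  · intro i
    obtain ⟨h1, h2, h3⟩ := hord i
    have := abs_le.1 (happ (le_trans h1 h2) h3)
    have h4 := hσ i
    linarith [this.1, this.2]

section
variable {x : ℝ → ℝ} {c s t : ℝ}

lemma truncVar_le {B : ℝ≥0∞}
    (H : ∀ (n : ℕ) (u : Fin (n+1) → ℝ), Monotone u → u 0 = s → u (Fin.last n) = t →
      ∑ i : Fin n, ENNReal.ofReal (|x (u i.succ) - x (u i.castSucc)| - c) ≤ B) :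
    truncVar x c s t ≤ B :=
  iSup₂_le fun n u => iSup₂_le fun h1 h2 => iSup_le fun h3 => H n u h1 h2 h3

lemma partition_le_truncVar (n : ℕ) (u : Fin (n+1) → ℝ) (h1 : Monotone u) (h2 : u 0 = s)
    (h3 : u (Fin.last n) = t) :
    ∑ i : Fin n, ENNReal.ofReal (|x (u i.succ) - x (u i.castSucc)| - c) ≤ truncVar x c s t :=
  le_iSup_of_le n (le_iSup_of_le u (le_iSup_of_le h1 (le_iSup_of_le h2 (le_iSup_of_le h3 le_rfl))))

end

/-- padding a family of times to a partition of `[s,t]`. -/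
noncomputable def pad (s t : ℝ) (n : ℕ) (w : Fin (n+1) → ℝ) : Fin (n+3) → ℝ := fun i =>
  if (i : ℕ) = 0 then s else if h2 : (i : ℕ) ≤ n + 1 then w ⟨(i : ℕ) - 1, by omega⟩ else t

lemma pad_mid (s t : ℝ) (n : ℕ) (w : Fin (n+1) → ℝ) (k : ℕ) (hk : k ≤ n)
    (i : Fin (n+3)) (hi : (i : ℕ) = k + 1) : pad s t n w i = w ⟨k, by omega⟩ := by
  unfold pad
  rw [if_neg (by omega), dif_pos (by omega)]
  congr 1
  ext
  simp [hi]

lemma pad_zero (s t : ℝ) (n : ℕ) (w : Fin (n+1) → ℝ) : pad s t n w 0 = s := by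
  unfold pad; simp

lemma pad_last (s t : ℝ) (n : ℕ) (w : Fin (n+1) → ℝ) :
    pad s t n w (Fin.last (n+2)) = t := by
  unfold pad
  rw [if_neg (by simp), dif_neg (by simp [Fin.last])]

section
variable {x : ℝ → ℝ} {c s t : ℝ}

/-- Any monotone family of times in `[s,t]` gives a lower bound for `truncVar`. -/
lemma sum_le_truncVar (n : ℕ) (w : Fin (n+1) → ℝ) (hw : Monotone w)
    (hb : ∀ i, s ≤ w i ∧ w i ≤ t) :
    ∑ i : Fin n, ENNReal.ofReal (|x (w i.succ) - x (w i.castSucc)| - c) ≤ truncVar x c s t := by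
  set u := pad s t n w with hu
  have hmono : Monotone u := by
    rw [Fin.monotone_iff_le_succ]
    intro i
    by_cases h0 : (i : ℕ) = 0
    · have e1 : i.castSucc = 0 := by ext; simpa using h0
      have e2 : u i.succ = w ⟨0, by omega⟩ := pad_mid s t n w 0 (by omega) _ (by simp [h0])
      rw [e1, e2, hu, pad_zero]
      exact (hb _).1
    · by_cases h1 : (i : ℕ) ≤ n
      · obtain ⟨k, hk⟩ : ∃ k, (i : ℕ) = k + 1 := ⟨(i : ℕ) - 1, by omega⟩
        have e1 : u i.castSucc = w ⟨k, by omega⟩ := pad_mid s t n w k (by omega) _ (by simp [hk])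
        have e2 : u i.succ = w ⟨k + 1, by omega⟩ :=
          pad_mid s t n w (k+1) (by omega) _ (by simp [hk])
        rw [e1, e2]
        exact hw (Fin.mk_le_mk.2 (by omega))
      · have hival : (i : ℕ) = n + 1 := by omega
        have e1 : u i.castSucc = w ⟨n, by omega⟩ := pad_mid s t n w n (by omega) _ (by simp [hival])
        have e2 : i.succ = Fin.last (n+2) := by ext; simp [hival, Fin.last]
        rw [e1, e2, hu, pad_last]
        exact (hb _).2
  refine le_trans ?_ (partition_le_truncVar (n+2) u hmono (pad_zero s t n w) (pad_last s t n w))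
  have einj : Function.Injective (fun j : Fin n => (⟨j + 1, by omega⟩ : Fin (n+2))) := by
    intro a b hab
    simpa [Fin.ext_iff] using hab
  calc ∑ i : Fin n, ENNReal.ofReal (|x (w i.succ) - x (w i.castSucc)| - c)
      = ∑ j : Fin n, ENNReal.ofReal
          (|x (u ((⟨(j : ℕ) + 1, by omega⟩ : Fin (n+2)).succ)) -
            x (u ((⟨(j : ℕ) + 1, by omega⟩ : Fin (n+2)).castSucc))| - c) := by
        refine Finset.sum_congr rfl fun j _ => ?_
        have e1 : u ((⟨(j : ℕ) + 1, by omega⟩ : Fin (n+2)).succ) = w j.succ := by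
          refine (pad_mid s t n w ((j : ℕ) + 1) (by omega) _ (by simp)).trans ?_
          congr 1
        have e2 : u ((⟨(j : ℕ) + 1, by omega⟩ : Fin (n+2)).castSucc) = w j.castSucc := by
          refine (pad_mid s t n w (j : ℕ) (by omega) _ (by simp)).trans ?_
          congr 1
        rw [e1, e2]
    _ = ∑ i ∈ Finset.univ.map ⟨fun j : Fin n => (⟨j + 1, by omega⟩ : Fin (n+2)), einj⟩,
          ENNReal.ofReal (|x (u i.succ) - x (u i.castSucc)| - c) := by
        rw [Finset.sum_map]; rfl
    _ ≤ ∑ i : Fin (n+2), ENNReal.ofReal (|x (u i.succ) - x (u i.castSucc)| - c) :=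
        Finset.sum_le_sum_of_subset (Finset.subset_univ _)

section
variable {x : ℝ → ℝ} {c s t : ℝ}
open MeasureTheory in
/-- The easy direction of the Banach indicatrix theorem. -/
lemma truncVar_le_lintegral_crossings (hc : 0 < c) :
    truncVar x c s t ≤ ∫⁻ y : ℝ, crossings x y c s t := by
  refine truncVar_le fun n u hmono hu0 hulast => ?_
  classical
  set J : Fin n → Set ℝ := fun i =>
    if x (u i.succ) < x (u i.castSucc)
      then Set.Ioc (x (u i.succ) + c/2) (x (u i.castSucc) - c/2)
      else Set.Ico (x (u i.castSucc) + c/2) (x (u i.succ) - c/2) with hJ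
  have hJm : ∀ i, MeasurableSet (J i) := by
    intro i
    simp only [hJ]
    split
    · exact measurableSet_Ioc
    · exact measurableSet_Ico
  have hvol : ∀ i, ENNReal.ofReal (|x (u i.succ) - x (u i.castSucc)| - c) = volume (J i) := by
    intro i
    simp only [hJ]
    split <;> rename_i h
    · rw [Real.volume_Ioc]
      congr 1
      rw [abs_of_neg (by linarith)]
      ring
    · rw [Real.volume_Ico]
      congr 1
      rw [abs_of_nonneg (by linarith [not_lt.1 h])]
      ring
  calc ∑ i : Fin n, ENNReal.ofReal (|x (u i.succ) - x (u i.castSucc)| - c)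
      = ∑ i : Fin n, ∫⁻ y, (J i).indicator (fun _ => (1:ℝ≥0∞)) y := by
        refine Finset.sum_congr rfl fun i _ => ?_
        rw [hvol i, lintegral_indicator_const (hJm i), one_mul]
    _ = ∫⁻ y, ∑ i : Fin n, (J i).indicator (fun _ => (1:ℝ≥0∞)) y := by
        rw [lintegral_finset_sum]
        exact fun i _ => measurable_const.indicator (hJm i)
    _ ≤ ∫⁻ y, crossings x y c s t := by
        refine lintegral_mono fun y => ?_
        -- pointwise bound
        have hs : ∀ k : Fin (n+1), s ≤ u k := fun k => hu0 ▸ hmono (Fin.zero_le k)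
        have ht : ∀ k : Fin (n+1), u k ≤ t := fun k => hulast ▸ hmono (Fin.le_last k)
        have split : ∀ i : Fin n, (J i).indicator (fun _ => (1:ℝ≥0∞)) y =
            (if x (u i.succ) < x (u i.castSucc) ∧ y ∈ J i then 1 else 0) +
            (if ¬ x (u i.succ) < x (u i.castSucc) ∧ y ∈ J i then 1 else 0) := by
          intro i
          rw [Set.indicator_apply]
          by_cases hd : x (u i.succ) < x (u i.castSucc) <;> by_cases hy : y ∈ J i <;>
            simp [hd, hy]
        rw [Finset.sum_congr rfl fun i _ => split i, Finset.sum_add_distrib]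
        have cardD : ∑ i : Fin n,
            (if x (u i.succ) < x (u i.castSucc) ∧ y ∈ J i then (1:ℝ≥0∞) else 0) =
            ((Finset.univ.filter fun i : Fin n =>
              x (u i.succ) < x (u i.castSucc) ∧ y ∈ J i).card : ℝ≥0∞) := by
          rw [Finset.card_eq_sum_ones, ← Finset.sum_filter]
          push_cast
          rfl
        have cardU : ∑ i : Fin n,
            (if ¬ x (u i.succ) < x (u i.castSucc) ∧ y ∈ J i then (1:ℝ≥0∞) else 0) =
            ((Finset.univ.filter fun i : Fin n =>
              ¬ x (u i.succ) < x (u i.castSucc) ∧ y ∈ J i).card : ℝ≥0∞) := by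
          rw [Finset.card_eq_sum_ones, ← Finset.sum_filter]
          push_cast
          rfl
        rw [cardD, cardU]
        unfold crossings
        rw [add_comm (upcross x y c s t)]
        refine add_le_add ?_ ?_
        · -- downcrossings
          set S := Finset.univ.filter fun i : Fin n =>
            x (u i.succ) < x (u i.castSucc) ∧ y ∈ J i with hS
          set e := S.orderIsoOfFin rfl with he
          refine le_downcross (n := S.card)
            ⟨fun j => u ((e j : Fin n)).castSucc, fun j => u ((e j : Fin n)).succ, ?_, ?_, ?_, ?_⟩
          · exact fun j => ⟨hs _, hmono (Fin.castSucc_le_succ _), ht _⟩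
          · intro i j hij
            refine hmono ?_
            have : (e i : Fin n) < (e j : Fin n) := by
              exact_mod_cast e.strictMono hij
            exact (Fin.succ_le_castSucc_iff.2 this).trans (le_refl _)
          · intro j
            obtain ⟨-, hd, hy⟩ := Finset.mem_filter.1 (e j).2
            simp only [hJ, if_pos hd, Set.mem_Ioc] at hy
            dsimp only
            linarith [hy.2]
          · intro j
            obtain ⟨-, hd, hy⟩ := Finset.mem_filter.1 (e j).2
            simp only [hJ, if_pos hd, Set.mem_Ioc] at hy
            dsimp only
            linarith [hy.1]
        · -- upcrossings
          set S := Finset.univ.filter fun i : Fin n =>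
            ¬ x (u i.succ) < x (u i.castSucc) ∧ y ∈ J i with hS
          set e := S.orderIsoOfFin rfl with he
          unfold upcross
          refine le_downcross (n := S.card)
            ⟨fun j => u ((e j : Fin n)).castSucc, fun j => u ((e j : Fin n)).succ, ?_, ?_, ?_, ?_⟩
          · exact fun j => ⟨hs _, hmono (Fin.castSucc_le_succ _), ht _⟩
          · intro i j hij
            refine hmono ?_
            have : (e i : Fin n) < (e j : Fin n) := by
              exact_mod_cast e.strictMono hij
            exact (Fin.succ_le_castSucc_iff.2 this).trans (le_refl _)
          · intro j
            obtain ⟨-, hd, hy⟩ := Finset.mem_filter.1 (e j).2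
            simp only [hJ, if_neg hd, Set.mem_Ico] at hy
            dsimp only
            linarith [hy.1]
          · intro j
            obtain ⟨-, hd, hy⟩ := Finset.mem_filter.1 (e j).2
            simp only [hJ, if_neg hd, Set.mem_Ico] at hy
            dsimp only
            linarith [hy.2]
end

/-- small-oscillation partitions of `[s, b]`. -/
def HasPart (x : ℝ → ℝ) (s δ : ℝ) (b : ℝ) : Prop :=
  ∃ (K : ℕ) (u : Fin (K + 1) → ℝ), Monotone u ∧ u 0 = s ∧ u (Fin.last K) = b ∧
    ∀ i : Fin K, ∀ p ∈ Set.Ioo (u i.castSucc) (u i.succ), ∀ q ∈ Set.Ioo (u i.castSucc) (u i.succ),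
      |x p - x q| ≤ 2 * δ

lemma hasPart_self (x : ℝ → ℝ) (s δ : ℝ) : HasPart x s δ s :=
  ⟨0, fun _ => s, monotone_const, rfl, rfl, fun i => absurd i.2 (by omega)⟩

lemma hasPart_extend {x : ℝ → ℝ} {s δ b b' : ℝ} (h : HasPart x s δ b) (hbb : b ≤ b')
    (hosc : ∀ p ∈ Set.Ioo b b', ∀ q ∈ Set.Ioo b b', |x p - x q| ≤ 2 * δ) :
    HasPart x s δ b' := by
  obtain ⟨K, u, hmono, h0, hlast, hosc'⟩ := h
  set u' : Fin (K + 2) → ℝ :=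
    fun i => if h : (i : ℕ) ≤ K then u ⟨(i : ℕ), by omega⟩ else b' with hu'
  have hval : ∀ (i : Fin (K + 2)) (h : (i : ℕ) ≤ K), u' i = u ⟨(i : ℕ), by omega⟩ := by
    intro i h
    simp only [hu']
    rw [dif_pos h]
  have hvalb : ∀ (i : Fin (K + 2)), ¬ ((i : ℕ) ≤ K) → u' i = b' := by
    intro i h
    simp only [hu']
    rw [dif_neg h]
  refine ⟨K + 1, u', ?_, ?_, ?_, ?_⟩
  · rw [Fin.monotone_iff_le_succ]
    intro i
    by_cases hi : (i : ℕ) < K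
    · rw [hval i.castSucc (by simp only [Fin.coe_castSucc]; omega),
        hval i.succ (by simp only [Fin.val_succ]; omega)]
      exact hmono (by simp [Fin.le_def])
    · have hiK : (i : ℕ) = K := by omega
      rw [hval i.castSucc (by simp only [Fin.coe_castSucc]; omega),
        hvalb i.succ (by simp only [Fin.val_succ]; omega)]
      have : u ⟨((i.castSucc : Fin (K+2)) : ℕ), by simp only [Fin.coe_castSucc]; omega⟩ =
          u (Fin.last K) := by
        congr 1
        ext
        simp [hiK]
      rw [this, hlast]
      exact hbb
  · rw [hval 0 (by simp), ← h0]
    congr 1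
  · exact hvalb (Fin.last (K + 1)) (by simp [Fin.last])
  · intro i p hp q hq
    by_cases hi : (i : ℕ) < K
    · rw [hval i.castSucc (by simp only [Fin.coe_castSucc]; omega),
        hval i.succ (by simp only [Fin.val_succ]; omega)] at hp hq
      have e1 : (⟨((i.castSucc : Fin (K+2)) : ℕ), by simp only [Fin.coe_castSucc]; omega⟩
          : Fin (K + 1)) = (⟨(i : ℕ), hi⟩ : Fin K).castSucc := by
        ext; simp
      have e2 : (⟨((i.succ : Fin (K+2)) : ℕ), by simp only [Fin.val_succ]; omega⟩
          : Fin (K + 1)) = (⟨(i : ℕ), hi⟩ : Fin K).succ := by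
        ext; simp
      rw [e1] at hp hq
      rw [e2] at hp hq
      exact hosc' ⟨(i : ℕ), hi⟩ p hp q hq
    · have hiK : (i : ℕ) = K := by omega
      rw [hval i.castSucc (by simp only [Fin.coe_castSucc]; omega),
        hvalb i.succ (by simp only [Fin.val_succ]; omega)] at hp hq
      have e1 : (⟨((i.castSucc : Fin (K+2)) : ℕ), by simp only [Fin.coe_castSucc]; omega⟩
          : Fin (K + 1)) = Fin.last K := by
        ext; simp [hiK]
      rw [e1, hlast] at hp hq
      exact hosc p hp q hq

lemma regulated_partition (x : ℝ → ℝ) (hx : Regulated x) (s t : ℝ) (hst : s ≤ t)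
    (δ : ℝ) (hδ : 0 < δ) : HasPart x s δ t := by
  set A : Set ℝ := {b | b ∈ Set.Icc s t ∧ HasPart x s δ b} with hA
  have hsA : s ∈ A := ⟨⟨le_refl s, hst⟩, hasPart_self x s δ⟩
  have hne : A.Nonempty := ⟨s, hsA⟩
  have hbdd : BddAbove A := ⟨t, fun b hb => hb.1.2⟩
  set b₀ := sSup A with hb₀
  have hsb : s ≤ b₀ := le_csSup hbdd hsA
  have hbt : b₀ ≤ t := csSup_le hne fun b hb => hb.1.2
  -- b₀ ∈ A using left limits
  have hb₀A : b₀ ∈ A := by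
    obtain ⟨l, hl⟩ := hx.2 b₀
    have hev : ∀ᶠ p in nhdsWithin b₀ (Set.Iio b₀), dist (x p) l < δ :=
      Metric.tendsto_nhds.1 hl δ hδ
    obtain ⟨lo, hlo, hsub⟩ := mem_nhdsLT_iff_exists_Ioo_subset.1 hev
    rcases eq_or_lt_of_le hsb with heq | hlt
    · rw [← heq]; exact hsA
    · have : ∃ b ∈ A, max lo s < b := by
        rcases le_or_gt b₀ (max lo s) with hc | hc
        · exact ⟨s, hsA, by
            exfalso
            rcases max_cases lo s with ⟨h1, h2⟩ | ⟨h1, h2⟩ <;> rw [h1] at hc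
            · exact absurd (lt_of_lt_of_le hlo hc) (lt_irrefl _) -- lo < b₀ ≤ lo
            · linarith⟩
        · obtain ⟨b, hbA, hb⟩ := exists_lt_of_lt_csSup hne hc
          exact ⟨b, hbA, hb⟩
      obtain ⟨b, hbA, hb⟩ := this
      refine ⟨⟨hsb, hbt⟩, hasPart_extend hbA.2 (le_csSup hbdd hbA) ?_⟩
      intro p hp q hq
      have hp' : p ∈ Set.Ioo lo b₀ := ⟨lt_trans (lt_of_le_of_lt (le_max_left lo s) hb) hp.1, hp.2⟩
      have hq' : q ∈ Set.Ioo lo b₀ := ⟨lt_trans (lt_of_le_of_lt (le_max_left lo s) hb) hq.1, hq.2⟩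
      have h1 := hsub hp'
      have h2 := hsub hq'
      rw [Set.mem_setOf_eq, Real.dist_eq] at h1 h2
      have htri := abs_sub_le (x p) l (x q)
      rw [abs_sub_comm l (x q)] at htri
      linarith
  -- b₀ = t using right limits
  rcases eq_or_lt_of_le hbt with heq | hlt
  · rw [← heq]; exact hb₀A.2
  · exfalso
    obtain ⟨l, hl⟩ := hx.1 b₀
    have hev : ∀ᶠ p in nhdsWithin b₀ (Set.Ioi b₀), dist (x p) l < δ :=
      Metric.tendsto_nhds.1 hl δ hδ
    obtain ⟨hi, hhi, hsub⟩ := mem_nhdsGT_iff_exists_Ioo_subset.1 hev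
    set b' := min t ((b₀ + min hi t) / 2) with hb'
    have hb'1 : b₀ < b' := by
      have h1 : b₀ < min hi t := lt_min hhi hlt
      rw [hb']
      simp only [lt_min_iff]
      exact ⟨hlt, by linarith⟩
    have hb't : b' ≤ t := min_le_left _ _
    have hb'A : b' ∈ A := by
      refine ⟨⟨le_trans hsb (le_of_lt hb'1), hb't⟩, hasPart_extend hb₀A.2 (le_of_lt hb'1) ?_⟩
      intro p hp q hq
      have hble : b' ≤ hi := by
        have h1 : min hi t ≤ hi := min_le_left _ _
        have h2 : b₀ < hi := hhi
        rw [hb']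
        refine le_trans (min_le_right _ _) (by linarith)
      have hsubset : Set.Ioo b₀ b' ⊆ Set.Ioo b₀ hi := fun z hz =>
        ⟨hz.1, lt_of_lt_of_le hz.2 hble⟩
      have h1 := hsub (hsubset hp)
      have h2 := hsub (hsubset hq)
      rw [Set.mem_setOf_eq, Real.dist_eq] at h1 h2
      have htri := abs_sub_le (x p) l (x q)
      rw [abs_sub_comm l (x q)] at htri
      linarith
    exact absurd (le_csSup hbdd hb'A) (not_le.2 hb'1)

lemma construction (x : ℝ → ℝ) (hx : Regulated x) {s t δ : ℝ} (hst : s ≤ t) (hδ : 0 < δ) :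
    ∃ (m : ℕ) (a : ℕ → ℝ) (f : ℝ → ℕ),
      (∀ ⦃p q⦄, s ≤ p → p ≤ q → q ≤ t → f p ≤ f q) ∧
      (∀ ⦃p⦄, s ≤ p → p ≤ t → f p ≤ m) ∧
      (∀ ⦃p⦄, s ≤ p → p ≤ t → |x p - a (f p)| ≤ 2 * δ) ∧
      (∃ τ : ℕ → ℝ, (∀ k l, k ≤ l → l ≤ m → τ k ≤ τ l) ∧ (∀ k ≤ m, s ≤ τ k ∧ τ k ≤ t) ∧
        (∀ k, a k = x (τ k))) := by
  classical
  obtain ⟨K, u, hmono, hu0, hulast, hosc⟩ := regulated_partition x hx s t hst δ hδ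
  set w : Fin K → ℝ := fun i =>
    if h : (Set.Ioo (u i.castSucc) (u i.succ)).Nonempty then h.choose else u i.castSucc with hwdef
  have hw : ∀ i, u i.castSucc ≤ w i ∧ w i ≤ u i.succ := by
    intro i
    simp only [hwdef]
    split <;> rename_i h
    · exact ⟨le_of_lt h.choose_spec.1, le_of_lt h.choose_spec.2⟩
    · exact ⟨le_refl _, hmono (Fin.castSucc_le_succ i)⟩
  have hwmem : ∀ i, (Set.Ioo (u i.castSucc) (u i.succ)).Nonempty →
      w i ∈ Set.Ioo (u i.castSucc) (u i.succ) := by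
    intro i h
    simp only [hwdef]
    rw [dif_pos h]
    exact h.choose_spec
  set τ : ℕ → ℝ := fun k =>
    if h : k < 2 * K then (if k % 2 = 0 then u ⟨k / 2, by omega⟩ else w ⟨k / 2, by omega⟩)
    else t with hτdef
  set a : ℕ → ℝ := fun k => x (τ k) with hadef
  set N : ℝ → ℕ := fun p => (Finset.univ.filter fun i : Fin (K+1) => u i < p).card with hNdef
  set f : ℝ → ℕ := fun p =>
    if h : ∃ n : ℕ, ∃ hn : n < K + 1, u ⟨n, hn⟩ = p then 2 * Nat.find h else 2 * N p - 1
    with hfdef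
  -- τ values
  have hτeven : ∀ (n : ℕ) (hn : n < K + 1), τ (2 * n) = u ⟨n, hn⟩ := by
    intro n hn
    simp only [hτdef]
    by_cases h : 2 * n < 2 * K
    · rw [dif_pos h, if_pos (by omega)]
      congr 1
      ext
      simp only [Fin.val_mk]
      omega
    · have hnK : n = K := by omega
      rw [dif_neg h, ← hulast]
      congr 1
      ext
      simp [Fin.last, hnK]
  have hτodd : ∀ (n : ℕ) (hn : n < K), τ (2 * n + 1) = w ⟨n, hn⟩ := by
    intro n hn
    simp only [hτdef]
    rw [dif_pos (by omega), if_neg (by omega)]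
    congr 1
    ext
    simp only [Fin.val_mk]
    omega
  -- N facts
  have hNmono : ∀ p q : ℝ, p ≤ q → N p ≤ N q := by
    intro p q hpq
    simp only [hNdef]
    exact Finset.card_le_card (Finset.monotone_filter_right _ fun i _ hi => lt_of_lt_of_le hi hpq)
  have hNlow : ∀ (i : Fin (K+1)) (p : ℝ), u i < p → (i : ℕ) + 1 ≤ N p := by
    intro i p hip
    simp only [hNdef]
    have := Finset.card_le_card_of_injOn (fun n => (⟨min n K, by omega⟩ : Fin (K+1)))
      (s := Finset.range ((i : ℕ) + 1))
      (t := Finset.univ.filter fun j : Fin (K+1) => u j < p) ?_ ?_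
    · simpa using this
    · intro n hn
      rw [Finset.mem_coe, Finset.mem_range] at hn
      rw [Finset.mem_coe, Finset.mem_filter]
      refine ⟨Finset.mem_univ _, lt_of_le_of_lt (hmono ?_) hip⟩
      rw [Fin.le_def]
      simp
      omega
    · intro n1 h1 n2 h2 he
      rw [Finset.coe_range, Set.mem_Iio] at h1 h2
      have := congr_arg Fin.val he
      simp at this
      omega
  have hNhigh : ∀ (i : Fin (K+1)) (p : ℝ), p ≤ u i → N p ≤ (i : ℕ) := by
    intro i p hip
    simp only [hNdef]
    have := Finset.card_le_card_of_injOn (fun j : Fin (K+1) => (j : ℕ))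
      (s := Finset.univ.filter fun j : Fin (K+1) => u j < p)
      (t := Finset.range (i : ℕ)) ?_ ?_
    · simpa using this
    · intro j hj
      rw [Finset.mem_coe, Finset.mem_filter] at hj
      rw [Finset.mem_coe, Finset.mem_range]
      by_contra hc
      push_neg at hc
      have : u i ≤ u j := hmono (by rwa [Fin.le_def])
      linarith [hj.2]
    · intro j1 _ j2 _ he
      exact Fin.ext he
  refine ⟨2 * K, a, f, ?_, ?_, ?_, τ, ?_, ?_, fun k => rfl⟩
  · -- monotone
    intro p q hsp hpq hqt
    rcases eq_or_lt_of_le hpq with heq | hlt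
    · rw [heq]
    simp only [hfdef]
    by_cases hp : ∃ n : ℕ, ∃ hn : n < K + 1, u ⟨n, hn⟩ = p
    · rw [dif_pos hp]
      obtain ⟨hip, hup⟩ := Nat.find_spec hp
      by_cases hq : ∃ n : ℕ, ∃ hn : n < K + 1, u ⟨n, hn⟩ = q
      · rw [dif_pos hq]
        obtain ⟨hiq, huq⟩ := Nat.find_spec hq
        have : Nat.find hp < Nat.find hq := by
          by_contra hc
          push_neg at hc
          have : u ⟨Nat.find hq, hiq⟩ ≤ u ⟨Nat.find hp, hip⟩ :=
            hmono (by rw [Fin.le_def]; simp only [Fin.val_mk]; omega)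
          rw [hup, huq] at this
          linarith
        omega
      · rw [dif_neg hq]
        have := hNlow ⟨Nat.find hp, hip⟩ q (by rw [hup]; exact hlt)
        simp only [Fin.val_mk] at this
        omega
    · rw [dif_neg hp]
      by_cases hq : ∃ n : ℕ, ∃ hn : n < K + 1, u ⟨n, hn⟩ = q
      · rw [dif_pos hq]
        obtain ⟨hiq, huq⟩ := Nat.find_spec hq
        have := hNhigh ⟨Nat.find hq, hiq⟩ p (by rw [huq]; exact le_of_lt hlt)
        simp only [Fin.val_mk] at this
        omega
      · rw [dif_neg hq]
        have := hNmono p q hpq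
        omega
  · -- bound
    intro p hsp hpt
    simp only [hfdef]
    by_cases hp : ∃ n : ℕ, ∃ hn : n < K + 1, u ⟨n, hn⟩ = p
    · rw [dif_pos hp]
      obtain ⟨hip, _⟩ := Nat.find_spec hp
      omega
    · rw [dif_neg hp]
      have := hNhigh (Fin.last K) p (by rwa [hulast])
      simp [Fin.last] at this
      omega
  · -- approximation
    intro p hsp hpt
    simp only [hfdef]
    by_cases hp : ∃ n : ℕ, ∃ hn : n < K + 1, u ⟨n, hn⟩ = p
    · rw [dif_pos hp]
      obtain ⟨hip, hup⟩ := Nat.find_spec hp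
      have : a (2 * Nat.find hp) = x p := by
        rw [hadef]
        simp only
        rw [hτeven (Nat.find hp) hip, hup]
      rw [this]
      simp
      positivity
    · rw [dif_neg hp]
      have hNp1 : 1 ≤ N p := by
        have h0 : u 0 < p := by
          rcases eq_or_lt_of_le (hu0 ▸ hsp) with heq | hlt2
          · exfalso
            exact hp ⟨0, by omega, by rw [← heq]; congr⟩
          · exact hlt2
        have := hNlow 0 p h0
        simpa using this
      have hNpK : N p ≤ K := by
        have := hNhigh (Fin.last K) p (by rwa [hulast])
        simpa [Fin.last] using this
      set j := N p - 1 with hj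
      have hjK : j < K := by omega
      have hlow : u ⟨j, by omega⟩ < p := by
        by_contra hc
        push_neg at hc
        have := hNhigh ⟨j, by omega⟩ p hc
        simp only [Fin.val_mk] at this
        omega
      have hhigh : p < u ⟨j + 1, by omega⟩ := by
        by_contra hc
        push_neg at hc
        rcases eq_or_lt_of_le hc with heq | hlt2
        · exact hp ⟨j + 1, by omega, heq⟩
        · have := hNlow ⟨j + 1, by omega⟩ p hlt2
          simp only [Fin.val_mk] at this
          omega
      have hpmem : p ∈ Set.Ioo (u (⟨j, hjK⟩ : Fin K).castSucc) (u (⟨j, hjK⟩ : Fin K).succ) := by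
        constructor
        · exact hlow
        · exact hhigh
      have hfval : 2 * N p - 1 = 2 * j + 1 := by omega
      have haval : a (2 * N p - 1) = x (w ⟨j, hjK⟩) := by
        rw [hfval, hadef]
        simp only
        rw [hτodd j hjK]
      rw [haval]
      exact hosc ⟨j, hjK⟩ p hpmem (w ⟨j, hjK⟩) (hwmem _ ⟨p, hpmem⟩)
  · -- τ monotone
    have henc : ∀ (k : ℕ) (hk : k ≤ 2 * K),
        u ⟨k / 2, by omega⟩ ≤ τ k ∧ τ k ≤ u ⟨(k + 1) / 2, by omega⟩ := by
      intro k hk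
      by_cases h : k < 2 * K
      · simp only [hτdef]
        rw [dif_pos h]
        by_cases he : k % 2 = 0
        · rw [if_pos he]
          constructor
          · exact le_refl _
          · exact hmono (by rw [Fin.le_def]; simp only [Fin.val_mk]; omega)
        · rw [if_neg he]
          obtain ⟨h1, h2⟩ := hw ⟨k / 2, by omega⟩
          constructor
          · refine le_trans (le_of_eq ?_) h1
            congr 1
          · refine le_trans h2 (le_of_eq ?_)
            congr 1
            ext
            simp
            omega
      · have hkK : k = 2 * K := by omega
        simp only [hτdef]
        rw [dif_neg h]
        constructor
        · rw [← hulast]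
          exact hmono (by rw [Fin.le_def]; simp only [Fin.val_mk, Fin.last]; omega)
        · rw [← hulast]
          exact hmono (by rw [Fin.le_def]; simp only [Fin.val_mk, Fin.last]; omega)
    intro k l hkl hl
    rcases eq_or_lt_of_le hkl with heq | hlt
    · rw [heq]
    refine le_trans (henc k (by omega)).2 (le_trans (hmono ?_) (henc l hl).1)
    rw [Fin.le_def]
    simp only [Fin.val_mk]
    omega
  · -- τ bounds
    have henc : ∀ (k : ℕ) (hk : k ≤ 2 * K),
        u ⟨k / 2, by omega⟩ ≤ τ k ∧ τ k ≤ u ⟨(k + 1) / 2, by omega⟩ := by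
      intro k hk
      by_cases h : k < 2 * K
      · simp only [hτdef]
        rw [dif_pos h]
        by_cases he : k % 2 = 0
        · rw [if_pos he]
          constructor
          · exact le_refl _
          · exact hmono (by rw [Fin.le_def]; simp only [Fin.val_mk]; omega)
        · rw [if_neg he]
          obtain ⟨h1, h2⟩ := hw ⟨k / 2, by omega⟩
          constructor
          · refine le_trans (le_of_eq ?_) h1
            congr 1
          · refine le_trans h2 (le_of_eq ?_)
            congr 1
            ext
            simp
            omega
      · have hkK : k = 2 * K := by omega
        simp only [hτdef]
        rw [dif_neg h]
        constructor
        · rw [← hulast]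
          exact hmono (by rw [Fin.le_def]; simp only [Fin.val_mk, Fin.last]; omega)
        · rw [← hulast]
          exact hmono (by rw [Fin.le_def]; simp only [Fin.val_mk, Fin.last]; omega)
    intro k hk
    constructor
    · rw [← hu0]
      exact le_trans (hmono (Fin.zero_le _)) (henc k hk).1
    · rw [← hulast]
      exact le_trans (henc k hk).2 (hmono (Fin.le_last _))

/-! ### Final assembly -/

open MeasureTheory

section
variable {x : ℝ → ℝ} {s t : ℝ}

lemma seqTV_le_truncVar {a : ℕ → ℝ} {m : ℕ} {c' : ℝ} (τ : ℕ → ℝ)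
    (hτm : ∀ k l, k ≤ l → l ≤ m → τ k ≤ τ l) (hτb : ∀ k ≤ m, s ≤ τ k ∧ τ k ≤ t)
    (hτa : ∀ k, a k = x (τ k)) :
    seqTV a m c' ≤ truncVar x c' s t := by
  refine seqTV_le fun n v h1 h2 => ?_
  have he : ∀ i : Fin n, ENNReal.ofReal (|a (v i.succ) - a (v i.castSucc)| - c') =
      ENNReal.ofReal (|x ((fun j => τ (v j)) i.succ) - x ((fun j => τ (v j)) i.castSucc)| - c') := by
    intro i
    rw [hτa (v i.succ), hτa (v i.castSucc)]
  rw [Finset.sum_congr rfl fun i _ => he i]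
  exact sum_le_truncVar n (fun j => τ (v j))
    (fun p q hpq => hτm _ _ (h1 hpq) (h2 q)) (fun i => (hτb _ (h2 i)))

lemma count_incr : ∀ (n : ℕ) (g : ℕ → ℕ), (∀ k l, k ≤ l → l ≤ n → g k ≤ g l) →
    (∑ k ∈ Finset.range n, if g k < g (k + 1) then 1 else 0) ≤ g n - g 0 := by
  intro n
  induction n with
  | zero => intro g _; simp
  | succ n IH =>
    intro g hg
    rw [Finset.sum_range_succ]
    have h1 := IH g (fun k l hkl hl => hg k l hkl (by omega))
    have h2 : (if g n < g (n + 1) then 1 else 0) ≤ g (n + 1) - g n := by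
      split <;> omega
    have h3 : g 0 ≤ g n := hg 0 n (by omega) (by omega)
    have h4 : g n ≤ g (n + 1) := hg n (n + 1) (by omega) (by omega)
    omega

lemma truncVar_lt_top (hx : Regulated x) (hst : s ≤ t) {c' : ℝ} (hc' : 0 < c') :
    truncVar x c' s t < ⊤ := by
  classical
  obtain ⟨m, a, f, hf, hfm, happ, τ, hτm, hτb, hτa⟩ :=
    construction x hx hst (show (0:ℝ) < c' / 4 by linarith)
  set B : ℝ := ((Finset.range (m + 1)).sup' ⟨0, by simp⟩ fun k => |a k|) + 2 * (c' / 4) with hB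
  have hxB : ∀ p, s ≤ p → p ≤ t → |x p| ≤ B := by
    intro p h1 h2
    have ha := happ h1 h2
    have hs' : |a (f p)| ≤ (Finset.range (m + 1)).sup' ⟨0, by simp⟩ fun k => |a k| :=
      Finset.le_sup' (f := fun k => |a k|)
        (Finset.mem_range.2 (Nat.lt_succ_of_le (hfm h1 h2)))
    rw [hB]
    have : |x p| ≤ |a (f p)| + |x p - a (f p)| := by
      have := abs_add_le (a (f p)) (x p - a (f p))
      simpa using this
    linarith
  have hfin : (m : ℝ≥0∞) * ENNReal.ofReal (2 * B) < ⊤ :=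
    ENNReal.mul_lt_top (ENNReal.natCast_lt_top m) ENNReal.ofReal_lt_top
  refine lt_of_le_of_lt (truncVar_le fun n u h1 h2 h3 => ?_) hfin
  -- bound each partition sum
  have hub : ∀ k : Fin (n+1), s ≤ u k ∧ u k ≤ t :=
    fun k => ⟨h2 ▸ h1 (Fin.zero_le k), h3 ▸ h1 (Fin.le_last k)⟩
  set g : ℕ → ℕ := fun k => f (u ⟨min k n, by omega⟩) with hg
  have hgm : ∀ k l, k ≤ l → l ≤ n → g k ≤ g l := by
    intro k l hkl hl
    simp only [hg]
    refine hf (hub _).1 (h1 ?_) (hub _).2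
    rw [Fin.le_def]
    simp only [Fin.val_mk]
    omega
  have hgb : g n ≤ m := hfm (hub _).1 (hub _).2
  have key : ∀ i : Fin n, ENNReal.ofReal (|x (u i.succ) - x (u i.castSucc)| - c') ≤
      if g (i : ℕ) < g ((i : ℕ) + 1) then ENNReal.ofReal (2 * B) else 0 := by
    intro i
    have hgi : g (i : ℕ) = f (u i.castSucc) := by
      simp only [hg]
      congr 2
      ext
      simp only [Fin.val_mk, Fin.coe_castSucc]
      omega
    have hgi1 : g ((i : ℕ) + 1) = f (u i.succ) := by
      simp only [hg]
      congr 2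
      ext
      simp only [Fin.val_mk, Fin.val_succ]
      omega
    by_cases hinc : g (i : ℕ) < g ((i : ℕ) + 1)
    · rw [if_pos hinc]
      refine ENNReal.ofReal_le_ofReal ?_
      have b1 := hxB _ (hub i.succ).1 (hub i.succ).2
      have b2 := hxB _ (hub i.castSucc).1 (hub i.castSucc).2
      have := abs_sub (x (u i.succ)) (x (u i.castSucc))
      have habs : |x (u i.succ) - x (u i.castSucc)| ≤ |x (u i.succ)| + |x (u i.castSucc)| :=
        abs_sub _ _
      linarith
    · rw [if_neg hinc]
      have heq : f (u i.castSucc) = f (u i.succ) := by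
        have hle : f (u i.castSucc) ≤ f (u i.succ) :=
          hf (hub _).1 (h1 (Fin.castSucc_le_succ i)) (hub _).2
        rw [hgi, hgi1] at hinc
        omega
      have ha1 := happ (hub i.succ).1 (hub i.succ).2
      have ha2 := happ (hub i.castSucc).1 (hub i.castSucc).2
      rw [heq] at ha2
      rw [ENNReal.ofReal_eq_zero.2 ?_]
      have htri : |x (u i.succ) - x (u i.castSucc)| ≤
          |x (u i.succ) - a (f (u i.succ))| + |x (u i.castSucc) - a (f (u i.succ))| := by
        have := abs_sub_le (x (u i.succ)) (a (f (u i.succ))) (x (u i.castSucc))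
        rw [abs_sub_comm (a (f (u i.succ))) (x (u i.castSucc))] at this
        exact this
      linarith
  calc ∑ i : Fin n, ENNReal.ofReal (|x (u i.succ) - x (u i.castSucc)| - c')
      ≤ ∑ i : Fin n, if g (i : ℕ) < g ((i : ℕ) + 1) then ENNReal.ofReal (2 * B) else 0 :=
        Finset.sum_le_sum fun i _ => key i
    _ = ∑ k ∈ Finset.range n, if g k < g (k + 1) then ENNReal.ofReal (2 * B) else 0 :=
        Fin.sum_univ_eq_sum_range (fun k => if g k < g (k + 1) then ENNReal.ofReal (2 * B) else 0) n
    _ = (∑ k ∈ Finset.range n, if g k < g (k + 1) then (1:ℝ≥0∞) else 0) * ENNReal.ofReal (2 * B) := by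
        rw [Finset.sum_mul]
        refine Finset.sum_congr rfl fun k _ => ?_
        split <;> simp
    _ ≤ (m : ℝ≥0∞) * ENNReal.ofReal (2 * B) := by
        refine mul_le_mul_left ?_ _
        have : (∑ k ∈ Finset.range n, if g k < g (k + 1) then (1:ℝ≥0∞) else 0) =
            ((∑ k ∈ Finset.range n, if g k < g (k + 1) then (1:ℕ) else 0 : ℕ) : ℝ≥0∞) := by
          push_cast
          refine Finset.sum_congr rfl fun k _ => ?_
          split <;> simp
        rw [this]
        have hcnt := count_incr n g hgm
        exact_mod_cast le_trans (Nat.cast_le.2 hcnt) (Nat.cast_le.2 (by omega))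

lemma truncVar_anti {c₁ c₂ : ℝ} (h : c₁ ≤ c₂) : truncVar x c₂ s t ≤ truncVar x c₁ s t := by
  refine truncVar_le fun n u h1 h2 h3 => ?_
  refine le_trans (Finset.sum_le_sum fun i _ => ?_) (partition_le_truncVar n u h1 h2 h3)
  exact ENNReal.ofReal_le_ofReal (by linarith)

lemma truncVar_lip {c c' : ℝ} (hc : 0 < c) (h1 : c / 2 ≤ c') (h2 : c' ≤ c) :
    truncVar x c' s t ≤ truncVar x c s t +
      ENNReal.ofReal ((c - c') * (4 / c)) * truncVar x (c / 4) s t := by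
  refine truncVar_le fun n u hm hu0 hul => ?_
  have key : ∀ i : Fin n, ENNReal.ofReal (|x (u i.succ) - x (u i.castSucc)| - c') ≤
      ENNReal.ofReal (|x (u i.succ) - x (u i.castSucc)| - c) +
      ENNReal.ofReal ((c - c') * (4 / c)) *
        ENNReal.ofReal (|x (u i.succ) - x (u i.castSucc)| - c / 4) := by
    intro i
    set D := |x (u i.succ) - x (u i.castSucc)| with hD
    by_cases hDc : D ≤ c'
    · rw [ENNReal.ofReal_eq_zero.2 (by linarith)]
      exact zero_le
    · push_neg at hDc
      have step1 : ENNReal.ofReal (D - c') ≤ ENNReal.ofReal (D - c) + ENNReal.ofReal (c - c') := by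
        have : D - c' = (D - c) + (c - c') := by ring
        rw [this]
        exact ENNReal.ofReal_add_le
      refine le_trans step1 (add_le_add_right ?_ _)
      have step2 : ENNReal.ofReal (c - c') ≤
          ENNReal.ofReal ((c - c') * (4 / c)) * ENNReal.ofReal (c / 4) := by
        rw [← ENNReal.ofReal_mul (mul_nonneg (by linarith) (by positivity))]
        refine ENNReal.ofReal_le_ofReal (le_of_eq ?_)
        field_simp
      refine le_trans step2 (mul_le_mul_right (ENNReal.ofReal_le_ofReal (by linarith)) _)
  calc ∑ i : Fin n, ENNReal.ofReal (|x (u i.succ) - x (u i.castSucc)| - c')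
      ≤ ∑ i : Fin n, (ENNReal.ofReal (|x (u i.succ) - x (u i.castSucc)| - c) +
          ENNReal.ofReal ((c - c') * (4 / c)) *
            ENNReal.ofReal (|x (u i.succ) - x (u i.castSucc)| - c / 4)) :=
        Finset.sum_le_sum fun i _ => key i
    _ = (∑ i : Fin n, ENNReal.ofReal (|x (u i.succ) - x (u i.castSucc)| - c)) +
        ENNReal.ofReal ((c - c') * (4 / c)) *
          (∑ i : Fin n, ENNReal.ofReal (|x (u i.succ) - x (u i.castSucc)| - c / 4)) := by
        rw [Finset.sum_add_distrib, Finset.mul_sum]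
    _ ≤ truncVar x c s t + ENNReal.ofReal ((c - c') * (4 / c)) * truncVar x (c / 4) s t :=
        add_le_add (partition_le_truncVar n u hm hu0 hul)
          (mul_le_mul_right (partition_le_truncVar n u hm hu0 hul) _)

lemma ge_aux (hx : Regulated x) {c δ : ℝ} (hst : s ≤ t) (hδ : 0 < δ) (hδc : 4 * δ < c) :
    ∫⁻ y : ℝ, crossings x y c s t ≤ truncVar x (c - 4 * δ) s t := by
  obtain ⟨m, a, f, hf, hfm, happ, τ, hτm, hτb, hτa⟩ := construction x hx hst hδ
  have hD : ∀ y : ℝ, downcross x y c s t ≤ seqD a m y (c - 4 * δ) := fun y =>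
    downcross_le_seqD hf hfm happ
  have hU : ∀ y : ℝ, upcross x y c s t ≤ seqD (fun k => -a k) m (-y) (c - 4 * δ) := by
    intro y
    unfold upcross
    refine downcross_le_seqD hf hfm ?_
    intro p hp hpt
    show |(-x p) - (-(a (f p)))| ≤ 2 * δ
    rw [show -x p - -(a (f p)) = -(x p - a (f p)) by ring, abs_neg]
    exact happ hp hpt
  calc ∫⁻ y : ℝ, crossings x y c s t
      ≤ ∫⁻ y : ℝ, (seqD (fun k => -a k) m (-y) (c - 4 * δ) + seqD a m y (c - 4 * δ)) :=
        lintegral_mono fun y => add_le_add (hU y) (hD y)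
    _ ≤ seqTV a m (c - 4 * δ) := core_seq (c - 4 * δ) (by linarith) m a
    _ ≤ truncVar x (c - 4 * δ) s t := seqTV_le_truncVar τ hτm hτb hτa

end

/-- Generalized Banach Indicatrix Theorem: for a regulated path the truncated
variation equals the integral over all levels of the number of interval crossings. -/
theorem truncVar_eq_lintegral_crossings (x : ℝ → ℝ) (hx : Regulated x)
    (s t c : ℝ) (hs : 0 ≤ s) (hst : s < t) (hc : 0 < c) :
    truncVar x c s t = ∫⁻ y : ℝ, crossings x y c s t := by
  have hst' : s ≤ t := le_of_lt hst
  refine le_antisymm (truncVar_le_lintegral_crossings hc) ?_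
  set F := truncVar x (c / 4) s t with hF
  have hFlt : F < ⊤ := truncVar_lt_top hx hst' (by linarith)
  refine ENNReal.le_of_forall_pos_le_add fun ε hε hTV => ?_
  set Fr := F.toReal with hFr
  have hFr0 : 0 ≤ Fr := ENNReal.toReal_nonneg
  set δ : ℝ := min (c / 16) ((ε : ℝ) * c / (16 * (Fr + 1))) with hδdef
  have hδ : 0 < δ := by
    rw [hδdef]
    refine lt_min (by linarith) (by positivity)
  have hδc : 4 * δ < c := by
    have : δ ≤ c / 16 := min_le_left _ _
    linarith
  have hchalf : c / 2 ≤ c - 4 * δ := by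
    have : δ ≤ c / 16 := min_le_left _ _
    linarith
  calc ∫⁻ y : ℝ, crossings x y c s t
      ≤ truncVar x (c - 4 * δ) s t := ge_aux hx hst' hδ hδc
    _ ≤ truncVar x c s t + ENNReal.ofReal ((c - (c - 4 * δ)) * (4 / c)) * F :=
        truncVar_lip hc hchalf (by linarith)
    _ ≤ truncVar x c s t + (ε : ℝ≥0∞) := by
        refine add_le_add_right ?_ _
        have he1 : (c - (c - 4 * δ)) * (4 / c) = 16 * δ / c := by
          field_simp
          ring
        rw [he1]
        have hδ2 : δ ≤ (ε : ℝ) * c / (16 * (Fr + 1)) := min_le_right _ _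
        have he2 : 16 * δ / c ≤ (ε : ℝ) / (Fr + 1) := by
          rw [div_le_div_iff₀ (by linarith) (by linarith)]
          have h16 : 0 < 16 * (Fr + 1) := by positivity
          have := mul_le_mul_of_nonneg_left hδ2 (by norm_num : (0:ℝ) ≤ 16)
          calc 16 * δ * (Fr + 1) ≤ 16 * ((ε : ℝ) * c / (16 * (Fr + 1))) * (Fr + 1) := by
                nlinarith
            _ = (ε : ℝ) * c := by field_simp
        have hFeq : F = ENNReal.ofReal Fr := (ENNReal.ofReal_toReal (ne_of_lt hFlt)).symm
        rw [hFeq]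
        calc ENNReal.ofReal (16 * δ / c) * ENNReal.ofReal Fr
            ≤ ENNReal.ofReal ((ε : ℝ) / (Fr + 1)) * ENNReal.ofReal Fr :=
              mul_le_mul_left (ENNReal.ofReal_le_ofReal he2) _
          _ = ENNReal.ofReal ((ε : ℝ) / (Fr + 1) * Fr) :=
              (ENNReal.ofReal_mul (by positivity)).symm
          _ ≤ ENNReal.ofReal (ε : ℝ) := by
              refine ENNReal.ofReal_le_ofReal ?_
              rw [div_mul_eq_mul_div, div_le_iff₀ (by linarith)]
              nlinarith [ε.coe_nonneg]
          _ = (ε : ℝ≥0∞) := ENNReal.ofReal_coe_nnreal
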